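/- arXiv:math/0203286 — 7 statements merged into one kernel-verified Lean document; each statement's English description precedes it below -/
import Mathlib

section
/- For an N×N matrix, det_{1≤i,j≤N}(z_i^{N-j+1} - z_i^{-(N-j+1)}) = ∏_{j=1}^N (z_j - 1/z_j) · ∏_{1≤i<j≤N} (z_j - z_i)(1/(z_i z_j) - 1), for nonzero complex z_1,...,z_N. -/
open Finset Polynomial

/-- Monic "Chebyshev-like" polynomials: `symq n (z + z⁻¹) = (z^(n+1) - z^(-(n+1)))/(z - z⁻¹)`. -/
noncomputable def symq : ℕ → Polynomial ℂ
  | 0 => 1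
  | 1 => Polynomial.X
  | (n + 2) => Polynomial.X * symq (n + 1) - symq n

lemma symq_monic_deg : ∀ n : ℕ, (symq n).Monic ∧ (symq n).natDegree = n
  | 0 => ⟨monic_one, natDegree_one⟩
  | 1 => ⟨monic_X, natDegree_X⟩
  | (n + 2) => by
    obtain ⟨h1, d1⟩ := symq_monic_deg (n + 1)
    obtain ⟨h0, d0⟩ := symq_monic_deg n
    have hx : (Polynomial.X * symq (n + 1)).Monic := monic_X.mul h1
    have hdx : (Polynomial.X * symq (n + 1)).natDegree = n + 2 := by
      rw [monic_X.natDegree_mul h1, natDegree_X, d1]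
      omega
    have hlt : (symq n).natDegree < (Polynomial.X * symq (n + 1)).natDegree := by
      rw [hdx, d0]; omega
    constructor
    · show (Polynomial.X * symq (n + 1) - symq n).Monic
      exact hx.sub_of_left (degree_lt_degree hlt)
    · show (Polynomial.X * symq (n + 1) - symq n).natDegree = n + 2
      rw [natDegree_sub_eq_left_of_natDegree_lt hlt, hdx]

lemma symq_eval (z : ℂ) (hz : z ≠ 0) : ∀ n : ℕ,
    (z - z⁻¹) * (symq n).eval (z + z⁻¹) = z ^ ((n : ℤ) + 1) - z ^ (-((n : ℤ) + 1))
  | 0 => by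
    simp only [symq, eval_one, mul_one, Nat.cast_zero, zero_add, zpow_one, zpow_neg]
  | 1 => by
    simp only [symq, eval_X, Nat.cast_one]
    have : ((1 : ℤ) + 1) = ((2 : ℕ) : ℤ) := by norm_num
    rw [this, zpow_natCast, zpow_neg, zpow_natCast]
    field_simp
    ring
  | (n + 2) => by
    have h1 := symq_eval z hz (n + 1)
    have h0 := symq_eval z hz n
    have e1 : ((n + 1 : ℕ) : ℤ) + 1 = ((n + 2 : ℕ) : ℤ) := by push_cast; ring
    have e0 : ((n : ℕ) : ℤ) + 1 = ((n + 1 : ℕ) : ℤ) := by push_cast; ring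
    have e2 : ((n + 2 : ℕ) : ℤ) + 1 = ((n + 3 : ℕ) : ℤ) := by push_cast; ring
    rw [e1] at h1
    rw [e0] at h0
    show (z - z⁻¹) * (Polynomial.X * symq (n + 1) - symq n).eval (z + z⁻¹) = _
    rw [e2]
    simp only [eval_sub, eval_mul, eval_X]
    have lhs_eq : (z - z⁻¹) * ((z + z⁻¹) * (symq (n + 1)).eval (z + z⁻¹)
        - (symq n).eval (z + z⁻¹)) =
        (z + z⁻¹) * ((z - z⁻¹) * (symq (n + 1)).eval (z + z⁻¹))
        - (z - z⁻¹) * (symq n).eval (z + z⁻¹) := by ring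
    rw [lhs_eq, h1, h0]
    simp only [zpow_neg, zpow_natCast]
    field_simp
    ring

lemma prod_pairs_rev {M : Type*} [CommMonoid M] {N : ℕ} (f : Fin N → Fin N → M) :
    (∏ i : Fin N, ∏ j ∈ Finset.Ioi i, f (Fin.rev j) (Fin.rev i)) =
      ∏ i : Fin N, ∏ j ∈ Finset.Ioi i, f i j := by
  rw [Finset.prod_sigma', Finset.prod_sigma']
  refine Finset.prod_bij' (fun x _ => ⟨Fin.rev x.2, Fin.rev x.1⟩)
    (fun x _ => ⟨Fin.rev x.2, Fin.rev x.1⟩) ?_ ?_ ?_ ?_ ?_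
  · rintro ⟨a, b⟩ h
    simp only [Finset.mem_sigma, Finset.mem_univ, Finset.mem_Ioi, true_and] at h ⊢
    exact Fin.rev_lt_rev.mpr h
  · rintro ⟨a, b⟩ h
    simp only [Finset.mem_sigma, Finset.mem_univ, Finset.mem_Ioi, true_and] at h ⊢
    exact Fin.rev_lt_rev.mpr h
  · rintro ⟨a, b⟩ _; simp [Fin.rev_rev]
  · rintro ⟨a, b⟩ _; simp [Fin.rev_rev]
  · rintro ⟨a, b⟩ _; simp [Fin.rev_rev]

/-- Weyl denominator formula for the symplectic group:
`det(z_i^{N-j+1} - z_i^{-(N-j+1)}) = ∏_j (z_j - z_j⁻¹) ∏_{i<j} (z_j - z_i)((z_i z_j)⁻¹ - 1)`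
for nonzero complex `z₁, …, z_N`. -/
theorem symplectic_weyl_denominator (N : ℕ) (z : Fin N → ℂ) (hz : ∀ i, z i ≠ 0) :
    Matrix.det (Matrix.of fun i j : Fin N =>
        z i ^ ((N : ℤ) - (j : ℕ)) - z i ^ (-((N : ℤ) - (j : ℕ)))) =
      (∏ j : Fin N, (z j - (z j)⁻¹)) *
        ∏ i : Fin N, ∏ j ∈ Finset.Ioi i, ((z j - z i) * ((z i * z j)⁻¹ - 1)) := by
  set t : Fin N → ℂ := fun i => z i + (z i)⁻¹ with ht
  -- Step 1: factor each row
  have hM : (Matrix.of fun i j : Fin N =>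
      z i ^ ((N : ℤ) - (j : ℕ)) - z i ^ (-((N : ℤ) - (j : ℕ)))) =
      Matrix.of fun i j : Fin N =>
        (z i - (z i)⁻¹) * (symq (N - 1 - (j : ℕ))).eval (t i) := by
    ext i j
    have hj : (N : ℤ) - (j : ℕ) = ((N - 1 - (j : ℕ) : ℕ) : ℤ) + 1 := by
      have := j.isLt; omega
    simp only [Matrix.of_apply]
    rw [hj, ← symq_eval (z i) (hz i)]
  rw [hM]
  refine (Matrix.det_mul_column (fun i => z i - (z i)⁻¹)
    (Matrix.of fun i j : Fin N => (symq (N - 1 - (j : ℕ))).eval (t i))).trans ?_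
  congr 1
  change (Matrix.of fun i j : Fin N => (symq (N - 1 - (j : ℕ))).eval (t i)).det = _
  -- Step 2: reverse rows and columns simultaneously
  have hsub : (Matrix.of fun i j : Fin N =>
        (symq (N - 1 - (j : ℕ))).eval (t i)).det =
      ((Matrix.of fun i j : Fin N =>
        (symq (N - 1 - (j : ℕ))).eval (t i)).submatrix Fin.revPerm Fin.revPerm).det :=
    (Matrix.det_submatrix_equiv_self Fin.revPerm _).symm
  rw [hsub]
  have hrev : ((Matrix.of fun i j : Fin N =>
        (symq (N - 1 - (j : ℕ))).eval (t i)).submatrix Fin.revPerm Fin.revPerm) =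
      Matrix.of fun i j : Fin N => (symq (j : ℕ)).eval (t (Fin.rev i)) := by
    ext i j
    have hv : N - 1 - ((Fin.rev j : Fin N) : ℕ) = (j : ℕ) := by
      have h1 : ((Fin.rev j : Fin N) : ℕ) = N - (j + 1) := Fin.val_rev j
      have := j.isLt; omega
    simp only [Matrix.submatrix_apply, Matrix.of_apply, Fin.revPerm_apply, hv]
  rw [hrev]
  -- Step 3: Vandermonde evaluation
  have hdeg : ∀ i : Fin N, (symq (i : ℕ)).natDegree = (i : ℕ) := fun i => (symq_monic_deg i).2
  have hmonic : ∀ i : Fin N, (symq (i : ℕ)).Monic := fun i => (symq_monic_deg i).1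
  have hvdm := Matrix.det_eval_matrixOfPolynomials_eq_det_vandermonde
    (fun i : Fin N => t (Fin.rev i)) (fun i : Fin N => symq (i : ℕ)) hdeg hmonic
  rw [← hvdm, Matrix.det_vandermonde]
  -- Step 4: reindex the product over pairs
  have := prod_pairs_rev (N := N) (fun i j => t i - t j)
  calc (∏ i : Fin N, ∏ j ∈ Finset.Ioi i, (t (Fin.rev j) - t (Fin.rev i)))
      = ∏ i : Fin N, ∏ j ∈ Finset.Ioi i, (t i - t j) := this
    _ = ∏ i : Fin N, ∏ j ∈ Finset.Ioi i, ((z j - z i) * ((z i * z j)⁻¹ - 1)) := by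
        refine Finset.prod_congr rfl fun i _ => Finset.prod_congr rfl fun j _ => ?_
        have hi := hz i; have hj := hz j
        rw [ht]
        field_simp
        ring
end

section
/- Let z_1(x,y) = π^{-1/2} e^{-(x-y)²}. Then for all real x_i < x_j, ∫_{y_1 < y_2} det( [z_1(x_i,y_1), z_1(x_i,y_2); z_1(x_j,y_1), z_1(x_j,y_2)] ) dy_1 dy_2 = Ψ((x_j - x_i)/√2), where Ψ(u) = (2/√π) ∫_0^u e^{-v²} dv. -/
open MeasureTheory Real intervalIntegral Set



noncomputable def dbSh : (ℝ × ℝ) ≃ᵐ (ℝ × ℝ) where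
  toEquiv :=
    { toFun := fun p => (p.2, p.2 + p.1)
      invFun := fun p => (p.2 - p.1, p.1)
      left_inv := fun p => by simp
      right_inv := fun p => by simp }
  measurable_toFun := measurable_snd.prodMk (measurable_snd.add measurable_fst)
  measurable_invFun := (measurable_snd.sub measurable_fst).prodMk measurable_fst

lemma dbSh_mp : MeasurePreserving dbSh (volume : Measure (ℝ × ℝ)) volume := by
  rw [Measure.volume_eq_prod]
  have h1 : MeasurePreserving (fun p : ℝ × ℝ => (p.1, p.1 + p.2))
      ((volume : Measure ℝ).prod volume) ((volume : Measure ℝ).prod volume) :=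
    (MeasurePreserving.id volume).skew_product (measurable_fst.add measurable_snd)
      (ae_of_all _ fun a => map_add_left_eq_self volume a)
  exact h1.comp Measure.measurePreserving_swap

lemma gc_rw (A B y : ℝ) :
    Real.exp (-(A - y) ^ 2) * Real.exp (-(B - y) ^ 2) =
      Real.exp (-((A - B) ^ 2 / 2)) * Real.exp (-2 * (y - (A + B) / 2) ^ 2) := by
  rw [← Real.exp_add, ← Real.exp_add]; congr 1; ring

lemma gc_integrable (A B : ℝ) :
    Integrable (fun y : ℝ => Real.exp (-(A - y) ^ 2) * Real.exp (-(B - y) ^ 2)) := by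
  simp only [gc_rw A B]
  exact ((integrable_exp_neg_mul_sq two_pos).comp_sub_right ((A + B) / 2)).const_mul _

lemma gc_val (A B : ℝ) :
    ∫ y : ℝ, Real.exp (-(A - y) ^ 2) * Real.exp (-(B - y) ^ 2) =
      Real.sqrt (π / 2) * Real.exp (-((A - B) ^ 2 / 2)) := by
  simp only [gc_rw A B]
  rw [MeasureTheory.integral_const_mul,
    integral_sub_right_eq_self (fun y : ℝ => Real.exp (-2 * y ^ 2)) ((A + B) / 2),
    integral_gaussian, mul_comm]

lemma shift_Ioi (c : ℝ) (g : ℝ → ℝ) :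
    ∫ s in Ioi (0:ℝ), g (s - c) = ∫ t in Ioi (-c), g t := by
  have h := (measurePreserving_sub_right (volume : Measure ℝ) c).setIntegral_preimage_emb
    (MeasurableEquiv.subRight c).measurableEmbedding g (Ioi (-c))
  have hs : ((· - c) : ℝ → ℝ) ⁻¹' Ioi (-c) = Ioi 0 := by
    ext x; simp [neg_lt_sub_iff_lt_add]
  rw [hs] at h
  exact h

noncomputable def GG : ℝ → ℝ := fun t => Real.exp (-(t ^ 2 / 2))

lemma GG_integrable : Integrable GG := by
  have : GG = fun t => Real.exp (-(1/2 : ℝ) * t ^ 2) := by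
    funext t; unfold GG; congr 1; ring
  rw [this]
  exact integrable_exp_neg_mul_sq (by norm_num)

lemma GG_diff (d : ℝ) (hd : 0 < d) :
    (∫ t in Ioi (-d), GG t) - ∫ t in Ioi d, GG t = ∫ t in (-d)..d, GG t := by
  rw [intervalIntegral.integral_of_le (by linarith)]
  have hu : Ioc (-d) d ∪ Ioi d = Ioi (-d) := Ioc_union_Ioi_eq_Ioi (by linarith)
  have := setIntegral_union (Ioc_disjoint_Ioi le_rfl) measurableSet_Ioi
    (GG_integrable.integrableOn (s := Ioc (-d) d)) (GG_integrable.integrableOn (s := Ioi d))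
  rw [hu] at this
  rw [this]; ring

lemma GG_even_interval (d : ℝ) : ∫ t in (-d)..(0:ℝ), GG t = ∫ t in (0:ℝ)..d, GG t := by
  have h := intervalIntegral.integral_comp_neg (a := (0:ℝ)) (b := d) GG
  simp only [neg_zero] at h
  rw [← h]
  congr 1; funext t; unfold GG; rw [neg_pow]; ring_nf

lemma GG_interval (d : ℝ) :
    ∫ t in (-d)..d, GG t = 2 * (Real.sqrt 2 * ∫ v in (0:ℝ)..(d / Real.sqrt 2), Real.exp (-v ^ 2)) := by
  have h2 : (Real.sqrt 2 : ℝ) ≠ 0 := by positivity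
  have hcomp : ∫ v in (0:ℝ)..(d / Real.sqrt 2), Real.exp (-v ^ 2)
      = ∫ v in (0:ℝ)..(d / Real.sqrt 2), GG (Real.sqrt 2 * v) := by
    congr 1; funext v; unfold GG
    rw [mul_pow, Real.sq_sqrt (by norm_num : (2:ℝ) ≥ 0)]
    congr 1; ring
  have hscale := intervalIntegral.integral_comp_mul_left (a := (0:ℝ))
    (b := d / Real.sqrt 2) (f := GG) h2
  rw [hcomp, hscale, mul_zero, mul_div_cancel₀ _ h2]
  have hsplit : ∫ t in (-d)..d, GG t = (∫ t in (-d)..(0:ℝ), GG t) + ∫ t in (0:ℝ)..d, GG t :=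
    (intervalIntegral.integral_add_adjacent_intervals
      GG_integrable.intervalIntegrable GG_integrable.intervalIntegrable).symm
  rw [hsplit, GG_even_interval]
  rw [smul_eq_mul]
  field_simp
  ring


lemma g_int (a : ℝ) : Integrable (fun y : ℝ => (Real.sqrt π)⁻¹ * Real.exp (-(a - y) ^ 2)) := by
  have h : (fun y : ℝ => Real.exp (-(a - y) ^ 2)) = fun y => Real.exp (-1 * (y - a) ^ 2) := by
    funext y; congr 1; ring
  refine Integrable.const_mul ?_ _
  rw [h]
  exact (integrable_exp_neg_mul_sq one_pos).comp_sub_right a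

/-- For the Gaussian kernel `z₁(x,y) = π^{-1/2} e^{-(x-y)²}` and `x_i < x_j`,
`∫_{y₁<y₂} det [z₁(xᵢ,y₁), z₁(xᵢ,y₂); z₁(xⱼ,y₁), z₁(xⱼ,y₂)] dy₁dy₂
  = Ψ((x_j - x_i)/√2)` with `Ψ(u) = (2/√π) ∫₀ᵘ e^{-v²} dv`. -/
theorem debruijn_gaussian_entry (xi xj : ℝ) (h : xi < xj) :
    (∫ p : ℝ × ℝ in {p : ℝ × ℝ | p.1 < p.2},
        ((Real.sqrt π)⁻¹ * Real.exp (-(xi - p.1) ^ 2) *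
            ((Real.sqrt π)⁻¹ * Real.exp (-(xj - p.2) ^ 2)) -
          (Real.sqrt π)⁻¹ * Real.exp (-(xi - p.2) ^ 2) *
            ((Real.sqrt π)⁻¹ * Real.exp (-(xj - p.1) ^ 2)))) =
      2 / Real.sqrt π * ∫ v in (0 : ℝ)..((xj - xi) / Real.sqrt 2), Real.exp (-v ^ 2) := by
  have hd : 0 < xj - xi := sub_pos.mpr h
  have hs0 : (0:ℝ) < Real.sqrt π := Real.sqrt_pos.mpr pi_pos
  set c : ℝ := (Real.sqrt π)⁻¹ with hc
  set F : ℝ × ℝ → ℝ := fun p =>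
      c * Real.exp (-(xi - p.1) ^ 2) * (c * Real.exp (-(xj - p.2) ^ 2)) -
        c * Real.exp (-(xi - p.2) ^ 2) * (c * Real.exp (-(xj - p.1) ^ 2)) with hF
  set S : Set (ℝ × ℝ) := {p : ℝ × ℝ | p.1 < p.2} with hS
  -- integrability of F
  have hFint : Integrable F (volume : Measure (ℝ × ℝ)) := by
    rw [Measure.volume_eq_prod]
    have h1 := (g_int xi).mul_prod (g_int xj)
    have h2' := (g_int xj).mul_prod (g_int xi)
    have h2 : Integrable
        (fun p : ℝ × ℝ => c * Real.exp (-(xi - p.2) ^ 2) * (c * Real.exp (-(xj - p.1) ^ 2)))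
        ((volume : Measure ℝ).prod volume) := by
      have he : (fun p : ℝ × ℝ =>
          c * Real.exp (-(xi - p.2) ^ 2) * (c * Real.exp (-(xj - p.1) ^ 2))) =
          fun p : ℝ × ℝ =>
          c * Real.exp (-(xj - p.1) ^ 2) * (c * Real.exp (-(xi - p.2) ^ 2)) := by
        funext p; ring
      rw [he]; exact h2'
    exact h1.sub h2
  -- change of variables
  have hpre : dbSh ⁻¹' S = (Ioi (0:ℝ)) ×ˢ (univ : Set ℝ) := by
    ext p
    simp only [hS, Set.mem_preimage, Set.mem_setOf_eq, Set.mem_prod, Set.mem_univ, and_true,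
      Set.mem_Ioi, dbSh, MeasurableEquiv.coe_mk, Equiv.coe_fn_mk]
    exact lt_add_iff_pos_right _
  have step1 : (∫ p in S, F p) = ∫ p in (Ioi (0:ℝ)) ×ˢ (univ : Set ℝ), F (dbSh p) := by
    rw [← hpre]
    exact (dbSh_mp.setIntegral_preimage_emb dbSh.measurableEmbedding F S).symm
  have hFcomp : Integrable (fun p : ℝ × ℝ => F (dbSh p)) (volume : Measure (ℝ × ℝ)) :=
    (dbSh_mp.integrable_comp_emb dbSh.measurableEmbedding).2 hFint
  have step2 : (∫ p in (Ioi (0:ℝ)) ×ˢ (univ : Set ℝ), F (dbSh p)) =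
      ∫ s in Ioi (0:ℝ), ∫ y : ℝ, F (dbSh (s, y)) := by
    rw [Measure.volume_eq_prod, MeasureTheory.setIntegral_prod _ hFcomp.integrableOn]
    simp [Measure.restrict_univ]
  -- inner integral
  have inner_eq : ∀ s : ℝ, (∫ y : ℝ, F (dbSh (s, y))) =
      π⁻¹ * Real.sqrt (π / 2) * (GG (s - (xj - xi)) - GG (s + (xj - xi))) := by
    intro s
    have hb : ∀ y : ℝ, F (dbSh (s, y)) =
        c * c * (Real.exp (-(xi - y) ^ 2) * Real.exp (-((xj - s) - y) ^ 2)) -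
          c * c * (Real.exp (-((xi - s) - y) ^ 2) * Real.exp (-(xj - y) ^ 2)) := by
      intro y
      show c * Real.exp (-(xi - y) ^ 2) * (c * Real.exp (-(xj - (y + s)) ^ 2)) -
          c * Real.exp (-(xi - (y + s)) ^ 2) * (c * Real.exp (-(xj - y) ^ 2)) = _
      rw [show xj - (y + s) = (xj - s) - y from by ring,
        show xi - (y + s) = (xi - s) - y from by ring]
      ring
    simp only [hb]
    rw [integral_sub ((gc_integrable _ _).const_mul _) ((gc_integrable _ _).const_mul _),
      MeasureTheory.integral_const_mul, MeasureTheory.integral_const_mul, gc_val, gc_val]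
    have hcc : c * c = π⁻¹ := by
      rw [hc, ← mul_inv, Real.mul_self_sqrt pi_pos.le]
    unfold GG
    rw [hcc, show (xi - (xj - s)) ^ 2 = (s - (xj - xi)) ^ 2 from by ring,
      show (xi - s - xj) ^ 2 = (s + (xj - xi)) ^ 2 from by ring]
    ring
  -- outer integral
  have step3 : (∫ s in Ioi (0:ℝ),
      π⁻¹ * Real.sqrt (π / 2) * (GG (s - (xj - xi)) - GG (s + (xj - xi)))) =
      π⁻¹ * Real.sqrt (π / 2) *
        ((∫ t in Ioi (-(xj - xi)), GG t) - ∫ t in Ioi (xj - xi), GG t) := by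
    rw [MeasureTheory.integral_const_mul]
    congr 1
    have hminus : ∫ s in Ioi (0:ℝ), GG (s - (xj - xi)) = ∫ t in Ioi (-(xj - xi)), GG t :=
      shift_Ioi (xj - xi) GG
    have hplus : ∫ s in Ioi (0:ℝ), GG (s + (xj - xi)) = ∫ t in Ioi (xj - xi), GG t := by
      have h' := shift_Ioi (-(xj - xi)) GG
      simp only [sub_neg_eq_add, neg_neg] at h'
      exact h'
    rw [integral_sub ((GG_integrable.comp_sub_right (xj - xi)).integrableOn)
      ((GG_integrable.comp_add_right (xj - xi)).integrableOn), hminus, hplus]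
  have step4 : ((∫ t in Ioi (-(xj - xi)), GG t) - ∫ t in Ioi (xj - xi), GG t) =
      2 * (Real.sqrt 2 * ∫ v in (0:ℝ)..((xj - xi) / Real.sqrt 2), Real.exp (-v ^ 2)) := by
    rw [GG_diff _ hd, GG_interval]
  -- assemble
  show (∫ p in S, F p) = _
  rw [step1, step2]
  simp only [inner_eq]
  rw [step3, step4]
  -- constants
  set T : ℝ := ∫ v in (0:ℝ)..((xj - xi) / Real.sqrt 2), Real.exp (-v ^ 2) with hT
  have h1 : Real.sqrt (π / 2) * Real.sqrt 2 = Real.sqrt π := by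
    rw [← Real.sqrt_mul (by positivity), div_mul_cancel₀ _ (two_ne_zero)]
  have hπ : Real.sqrt π * Real.sqrt π = π := Real.mul_self_sqrt pi_pos.le
  have h3 : π⁻¹ * Real.sqrt π = (Real.sqrt π)⁻¹ := by
    field_simp
    exact Real.sq_sqrt pi_pos.le
  calc π⁻¹ * Real.sqrt (π / 2) * (2 * (Real.sqrt 2 * T))
      = π⁻¹ * (Real.sqrt (π / 2) * Real.sqrt 2) * (2 * T) := by ring
    _ = π⁻¹ * Real.sqrt π * (2 * T) := by rw [h1]
    _ = (Real.sqrt π)⁻¹ * (2 * T) := by rw [h3]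
    _ = 2 / Real.sqrt π * T := by ring
end

section
/- The function h_N(x) = ∏_{1≤i<j≤N}(x_j - x_i) is harmonic on ℝ^N, i.e., Δh_N = Σ_{i=1}^N ∂²h_N/∂x_i² = 0. -/
open Finset Polynomial

namespace VandermondeHarmonicAux

noncomputable section

variable {N : ℕ}

/-- derivative of a product of monic linear factors -/
lemma deriv_prod_lin {ι : Type*} [DecidableEq ι] (t : Finset ι) (a : ι → ℝ) :
    derivative (∏ j ∈ t, (X - C (a j))) = ∑ j ∈ t, ∏ k ∈ t.erase j, (X - C (a k)) := by
  induction t using Finset.induction_on with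
  | empty => simp
  | @insert i t hi ih =>
      rw [Finset.prod_insert hi, derivative_mul, derivative_X_sub_C, one_mul, ih,
        Finset.mul_sum, Finset.sum_insert hi, Finset.erase_insert hi]
      congr 1
      refine Finset.sum_congr rfl fun j hj => ?_
      have hji : j ≠ i := fun h => hi (h ▸ hj)
      rw [Finset.erase_insert_of_ne hji.symm,
        Finset.prod_insert (fun h => hi (Finset.mem_of_mem_erase h))]

def Rpoly (x : Fin N → ℝ) (i : Fin N) : Polynomial ℝ :=
  ∏ k : Fin N, ∏ l ∈ Finset.Ioi k,
    ((if l = i then X else C (x l)) - (if k = i then X else C (x k)))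

lemma Rpoly_eval (x : Fin N → ℝ) (i : Fin N) (u : ℝ) :
    (Rpoly x i).eval u
      = ∏ k : Fin N, ∏ l ∈ Finset.Ioi k,
          (Function.update x i u l - Function.update x i u k) := by
  simp only [Rpoly, eval_prod, eval_sub, apply_ite (eval u), eval_X, eval_C,
    Function.update_apply]

def cc (x : Fin N → ℝ) (i : Fin N) : ℝ :=
  (-1 : ℝ) ^ (Finset.Ioi i).card *
    ∏ k ∈ Finset.univ.erase i, ∏ l ∈ (Finset.Ioi k).erase i, (x l - x k)

lemma Rpoly_factor (x : Fin N → ℝ) (i : Fin N) :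
    Rpoly x i = C (cc x i) * ∏ j ∈ Finset.univ.erase i, (X - C (x j)) := by
  classical
  rw [Rpoly, ← Finset.mul_prod_erase Finset.univ _ (Finset.mem_univ i)]
  have h1 : ∏ l ∈ Finset.Ioi i,
      ((if l = i then X else C (x l)) - (if i = i then X else C (x i)))
      = (-1 : Polynomial ℝ) ^ (Finset.Ioi i).card * ∏ l ∈ Finset.Ioi i, (X - C (x l)) := by
    rw [← Finset.prod_const, ← Finset.prod_mul_distrib]
    refine Finset.prod_congr rfl fun l hl => ?_
    rw [if_neg (Finset.mem_Ioi.mp hl).ne', if_pos rfl]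
    ring
  have h2 : ∀ k ∈ Finset.univ.erase i,
      (∏ l ∈ Finset.Ioi k,
        ((if l = i then X else C (x l)) - (if k = i then X else C (x k))))
      = (if k < i then X - C (x k) else 1) *
          C (∏ l ∈ (Finset.Ioi k).erase i, (x l - x k)) := by
    intro k hk
    have hki : k ≠ i := Finset.ne_of_mem_erase hk
    rw [if_neg hki, map_prod]
    have hrest : ∏ l ∈ (Finset.Ioi k).erase i,
        ((if l = i then X else C (x l)) - C (x k))
        = ∏ l ∈ (Finset.Ioi k).erase i, C (x l - x k) := by
      refine Finset.prod_congr rfl fun l hl => ?_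
      rw [if_neg (Finset.ne_of_mem_erase hl), map_sub]
    by_cases hik : k < i
    · rw [if_pos hik, ← Finset.mul_prod_erase (Finset.Ioi k) _ (Finset.mem_Ioi.mpr hik),
        if_pos rfl, hrest]
    · have he : (Finset.Ioi k).erase i = Finset.Ioi k :=
        Finset.erase_eq_of_notMem (fun h => hik (Finset.mem_Ioi.mp h))
      rw [if_neg hik, one_mul, ← hrest, he]
  rw [Finset.prod_congr rfl h2, Finset.prod_mul_distrib, h1, ← map_prod]
  have h3 : ∏ k ∈ Finset.univ.erase i, (if k < i then X - C (x k) else 1)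
      = ∏ k ∈ Finset.Iio i, (X - C (x k)) := by
    rw [← Finset.prod_filter]
    congr 1
    ext k
    simp only [Finset.mem_filter, Finset.mem_erase, Finset.mem_univ, Finset.mem_Iio,
      and_true, true_and]
    exact ⟨fun h => h.2, fun h => ⟨h.ne, h⟩⟩
  rw [h3]
  have h4 : ∏ j ∈ Finset.univ.erase i, (X - C (x j))
      = (∏ l ∈ Finset.Ioi i, (X - C (x l))) * ∏ k ∈ Finset.Iio i, (X - C (x k)) := by
    rw [← Finset.prod_union]
    · congr 1
      ext j
      simp only [Finset.mem_union, Finset.mem_Ioi, Finset.mem_Iio, Finset.mem_erase,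
        Finset.mem_univ, and_true]
      rw [lt_or_lt_iff_ne]
      exact ne_comm
    · exact Finset.disjoint_left.mpr fun j hj hj' =>
        absurd ((Finset.mem_Iio.mp hj').trans (Finset.mem_Ioi.mp hj)) (lt_irrefl j)
  rw [h4, cc, map_mul, map_pow, map_neg, map_one]
  ring


lemma second_eval (x : Fin N → ℝ) (i : Fin N) :
    ((Rpoly x i).derivative.derivative).eval (x i)
      = cc x i * ∑ j ∈ Finset.univ.erase i, ∑ k ∈ (Finset.univ.erase i).erase j,
          ∏ l ∈ (((Finset.univ.erase i).erase j).erase k), (x i - x l) := by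
  rw [Rpoly_factor, derivative_C_mul, derivative_C_mul, deriv_prod_lin, derivative_sum]
  simp only [deriv_prod_lin]
  simp [eval_mul, eval_C, eval_finset_sum, eval_prod, eval_sub, eval_X]

lemma hprod_eq (x : Fin N → ℝ) (i : Fin N) :
    cc x i * ∏ j ∈ Finset.univ.erase i, (x i - x j)
      = ∏ k : Fin N, ∏ l ∈ Finset.Ioi k, (x l - x k) := by
  have h := Rpoly_eval x i (x i)
  rw [Rpoly_factor] at h
  simpa [eval_mul, eval_C, eval_prod, eval_sub, eval_X, Function.update_eq_self] using h

def FF (N : ℕ) (x : Fin N → ℝ) : ℝ :=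
  ∑ i, cc x i * ∑ j ∈ Finset.univ.erase i, ∑ k ∈ (Finset.univ.erase i).erase j,
      ∏ l ∈ (((Finset.univ.erase i).erase j).erase k), (x i - x l)

lemma cyclic_zero (g : Fin N → Fin N → Fin N → ℝ)
    (hg : ∀ i j k, g i j k + g j k i + g k i j = 0) :
    ∑ i : Fin N, ∑ j : Fin N, ∑ k : Fin N, g i j k = 0 := by
  have e1 : (∑ i : Fin N, ∑ j : Fin N, ∑ k : Fin N, g j k i)
      = ∑ i : Fin N, ∑ j : Fin N, ∑ k : Fin N, g i j k := by
    calc (∑ i : Fin N, ∑ j : Fin N, ∑ k : Fin N, g j k i)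
        = ∑ j : Fin N, ∑ i : Fin N, ∑ k : Fin N, g j k i := Finset.sum_comm
      _ = ∑ j : Fin N, ∑ k : Fin N, ∑ i : Fin N, g j k i :=
          Finset.sum_congr rfl fun j _ => Finset.sum_comm
  have e2 : (∑ i : Fin N, ∑ j : Fin N, ∑ k : Fin N, g k i j)
      = ∑ i : Fin N, ∑ j : Fin N, ∑ k : Fin N, g i j k := by
    calc (∑ i : Fin N, ∑ j : Fin N, ∑ k : Fin N, g k i j)
        = ∑ i : Fin N, ∑ k : Fin N, ∑ j : Fin N, g k i j :=
          Finset.sum_congr rfl fun i _ => Finset.sum_comm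
      _ = ∑ k : Fin N, ∑ i : Fin N, ∑ j : Fin N, g k i j := Finset.sum_comm
  have h0 : ∑ i : Fin N, ∑ j : Fin N, ∑ k : Fin N, (g i j k + g j k i + g k i j) = 0 := by
    simp [hg]
  simp only [Finset.sum_add_distrib] at h0
  rw [e1, e2] at h0
  linarith

lemma FF_eq_zero_of_inj (x : Fin N → ℝ) (hx : Function.Injective x) : FF N x = 0 := by
  classical
  set P : ℝ := ∏ k : Fin N, ∏ l ∈ Finset.Ioi k, (x l - x k) with hP
  have hsub : ∀ {i j : Fin N}, j ≠ i → x i - x j ≠ 0 := by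
    intro i j h
    exact sub_ne_zero.mpr fun e => h (hx e).symm
  set g : Fin N → Fin N → Fin N → ℝ := fun i j k =>
    if j = i then 0 else if k = i then 0 else if k = j then 0
      else P * ((x i - x j) * (x i - x k))⁻¹ with hg
  have step1 : FF N x = ∑ i : Fin N, ∑ j : Fin N, ∑ k : Fin N, g i j k := by
    unfold FF
    refine Finset.sum_congr rfl fun i _ => ?_
    rw [Finset.mul_sum]
    have inner : ∀ j ∈ Finset.univ.erase i,
        cc x i * ∑ k ∈ (Finset.univ.erase i).erase j,
            ∏ l ∈ (((Finset.univ.erase i).erase j).erase k), (x i - x l)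
          = ∑ k : Fin N, if k = i then 0 else if k = j then 0
              else P * ((x i - x j) * (x i - x k))⁻¹ := by
      intro j hj
      have hji : j ≠ i := Finset.ne_of_mem_erase hj
      rw [Finset.mul_sum]
      have e : ∀ k ∈ (Finset.univ.erase i).erase j,
          cc x i * ∏ l ∈ (((Finset.univ.erase i).erase j).erase k), (x i - x l)
            = P * ((x i - x j) * (x i - x k))⁻¹ := by
        intro k hk
        have hkj : k ≠ j := Finset.ne_of_mem_erase hk
        have hki : k ≠ i := Finset.ne_of_mem_erase (Finset.mem_of_mem_erase hk)
        have h1 := Finset.prod_erase_mul ((Finset.univ.erase i).erase j)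
          (fun l => x i - x l) hk
        have h2 := Finset.prod_erase_mul (Finset.univ.erase i)
          (fun l => x i - x l) hj
        have h3 := hprod_eq x i
        have key : cc x i * (∏ l ∈ (((Finset.univ.erase i).erase j).erase k),
            (x i - x l)) * ((x i - x j) * (x i - x k)) = P := by
          calc cc x i * (∏ l ∈ (((Finset.univ.erase i).erase j).erase k),
                (x i - x l)) * ((x i - x j) * (x i - x k))
              = cc x i * ((∏ l ∈ (((Finset.univ.erase i).erase j).erase k),
                  (x i - x l)) * (x i - x k) * (x i - x j)) := by ring
            _ = cc x i * ((∏ l ∈ ((Finset.univ.erase i).erase j),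
                  (x i - x l)) * (x i - x j)) := by rw [h1]
            _ = cc x i * ∏ l ∈ (Finset.univ.erase i), (x i - x l) := by rw [h2]
            _ = P := h3
        rw [← div_eq_mul_inv, eq_div_iff (mul_ne_zero (hsub hji) (hsub hki))]
        exact key
      rw [Finset.sum_congr rfl e]
      -- now convert erased sum over k to full sum with ifs
      rw [← Finset.filter_ne' ((Finset.univ.erase i)) j, Finset.sum_filter]
      rw [← Finset.filter_ne' (Finset.univ) i, Finset.sum_filter]
      refine Finset.sum_congr rfl fun k _ => ?_
      by_cases h1 : k = i <;> by_cases h2 : k = j <;> simp [h1, h2]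
    rw [Finset.sum_congr rfl inner]
    rw [← Finset.filter_ne' (Finset.univ) i, Finset.sum_filter]
    refine Finset.sum_congr rfl fun j _ => ?_
    by_cases h1 : j = i
    · simp [hg, h1]
    · simp [hg, h1]
  rw [step1]
  refine cyclic_zero g fun i j k => ?_
  by_cases h1 : j = i
  · subst h1; simp [hg]
  by_cases h2 : k = i
  · subst h2; simp [hg]
  by_cases h3 : k = j
  · subst h3; simp [hg, h1]
  have h1' : ¬ i = j := fun e => h1 e.symm
  have h2' : ¬ i = k := fun e => h2 e.symm
  have h3' : ¬ j = k := fun e => h3 e.symm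
  simp only [hg, h1, h2, h3, h1', h2', h3', if_false, ite_false]
  have a1 : x i - x j ≠ 0 := hsub h1
  have a2 : x i - x k ≠ 0 := hsub h2
  have a3 : x j - x k ≠ 0 := hsub h3
  have a4 : x j - x i ≠ 0 := hsub h1'
  have a5 : x k - x i ≠ 0 := hsub h2'
  have a6 : x k - x j ≠ 0 := hsub h3'
  field_simp
  ring


lemma FF_continuous : Continuous (FF N) := by
  unfold FF cc
  refine continuous_finset_sum _ fun i _ => Continuous.mul ?_ ?_
  · refine Continuous.mul continuous_const ?_
    refine continuous_finset_prod _ fun k _ => ?_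
    refine continuous_finset_prod _ fun l _ => ?_
    exact (continuous_apply l).sub (continuous_apply k)
  · refine continuous_finset_sum _ fun j _ => ?_
    refine continuous_finset_sum _ fun k _ => ?_
    refine continuous_finset_prod _ fun l _ => ?_
    exact (continuous_apply i).sub (continuous_apply l)

lemma dense_inj (N : ℕ) : Dense {y : Fin N → ℝ | Function.Injective y} := by
  rw [Metric.dense_iff]
  intro x r hr
  classical
  set B : Finset ℝ := Finset.image
    (fun p : Fin N × Fin N => (x p.2 - x p.1) / ((p.1 : ℝ) - (p.2 : ℝ))) Finset.univ with hB
  have hpos : (0:ℝ) < r / (N + 1) := by positivity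
  obtain ⟨ε, hε, hεB⟩ := (Set.Ioo_infinite hpos).exists_notMem_finset B
  obtain ⟨hε0, hεr⟩ := hε
  refine ⟨fun i => x i + ε * (i : ℝ), ?_, ?_⟩
  · rw [Metric.mem_ball, dist_pi_lt_iff hr]
    intro i
    rw [Real.dist_eq]
    have hi : (i : ℝ) ≤ N := by
      have := i.isLt
      exact_mod_cast this.le
    have hi0 : (0:ℝ) ≤ (i : ℝ) := by positivity
    have habs : |x i + ε * (i : ℝ) - x i| = ε * (i : ℝ) := by
      rw [add_sub_cancel_left, abs_of_nonneg (by positivity)]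
    rw [habs]
    have h1 : ε * (N + 1) < r := by
      rw [lt_div_iff₀ (by positivity : (0:ℝ) < (N:ℝ) + 1)] at hεr
      linarith
    nlinarith
  · intro i j hij
    by_contra hne
    have hvij : ((j : ℝ)) - (i : ℝ) ≠ 0 := by
      have : (j : ℕ) ≠ (i : ℕ) := fun h => (fun e => hne e.symm) (Fin.val_injective h)
      have : ((j : ℝ)) ≠ (i : ℝ) := by exact_mod_cast this
      exact sub_ne_zero.mpr this
    apply hεB
    have hε_eq : ε = (x i - x j) / ((j : ℝ) - (i : ℝ)) := by
      rw [eq_div_iff hvij]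
      have : x i + ε * (i : ℝ) = x j + ε * (j : ℝ) := hij
      linarith [this]
    rw [hε_eq]
    exact Finset.mem_image.mpr ⟨(j, i), Finset.mem_univ _, rfl⟩

end

end VandermondeHarmonicAux

open VandermondeHarmonicAux in
/-- The Vandermonde product `h_N(x) = ∏_{i<j} (x_j - x_i)` is harmonic on `ℝ^N`:
the sum of its second partial derivatives vanishes everywhere. -/
theorem vandermonde_harmonic (N : ℕ) (x : Fin N → ℝ) :
    (∑ i : Fin N,
        deriv (fun s : ℝ =>
          deriv (fun u : ℝ =>
            ∏ k : Fin N, ∏ l ∈ Finset.Ioi k,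
              (Function.update x i u l - Function.update x i u k)) s) (x i)) = 0 := by
  classical
  have h1 : (∑ i : Fin N,
        deriv (fun s : ℝ =>
          deriv (fun u : ℝ =>
            ∏ k : Fin N, ∏ l ∈ Finset.Ioi k,
              (Function.update x i u l - Function.update x i u k)) s) (x i))
      = ∑ i : Fin N, ((Rpoly x i).derivative.derivative).eval (x i) := by
    refine Finset.sum_congr rfl fun i _ => ?_
    have hf : (fun u : ℝ => ∏ k : Fin N, ∏ l ∈ Finset.Ioi k,
        (Function.update x i u l - Function.update x i u k))
        = fun u : ℝ => (Rpoly x i).eval u := funext fun u => (Rpoly_eval x i u).symm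
    rw [hf]
    simp only [Polynomial.deriv]
  have h2 : (∑ i : Fin N, ((Rpoly x i).derivative.derivative).eval (x i)) = FF N x := by
    unfold FF
    exact Finset.sum_congr rfl fun i _ => second_eval x i
  have hext : FF N = fun _ => 0 :=
    Continuous.ext_on (dense_inj N) FF_continuous continuous_const
      fun y hy => FF_eq_zero_of_inj y hy
  rw [h1, h2, congrFun hext x]
end

section
/- The function ĥ_N(x) = ∏_{1≤i<j≤N}(x_j² - x_i²) · ∏_{i=1}^N x_i is harmonic on ℝ^N, i.e., Δĥ_N = 0. -/
open Finset MvPolynomial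

noncomputable def typeCP (N : ℕ) : MvPolynomial (Fin N) ℝ :=
  (∏ k : Fin N, ∏ l ∈ Finset.Ioi k, (X l ^ 2 - X k ^ 2)) * ∏ k : Fin N, X k

lemma sum_single_comp_apply {N : ℕ} (σ : Equiv.Perm (Fin N)) (g : Fin N → ℕ) (j : Fin N) :
    (∑ k : Fin N, Finsupp.single (σ k) (g k)) j = g (σ.symm j) := by
  rw [Finsupp.finset_sum_apply, Finset.sum_eq_single (σ.symm j)]
  · simp
  · intro k _ hk
    rw [Finsupp.single_apply, if_neg]
    intro h
    exact hk (by simpa using congrArg σ.symm h)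
  · simp

/-- exponent of the σ-term -/
noncomputable def typeCE (N : ℕ) (σ : Equiv.Perm (Fin N)) : Fin N →₀ ℕ :=
  ∑ i : Fin N, Finsupp.single (σ i) (2 * (i : ℕ) + 1)

lemma typeCP_eq (N : ℕ) :
    typeCP N = ∑ σ : Equiv.Perm (Fin N),
      monomial (typeCE N σ) (((Equiv.Perm.sign σ : ℤ) : ℝ)) := by
  rw [typeCP, ← Matrix.det_vandermonde (fun k => (X k : MvPolynomial (Fin N) ℝ) ^ 2),
    Matrix.det_apply', Finset.sum_mul]
  refine Finset.sum_congr rfl fun σ _ => ?_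
  have h1 : (∏ k : Fin N, (X k : MvPolynomial (Fin N) ℝ)) = ∏ i : Fin N, X (σ i) :=
    (Equiv.prod_comp σ _).symm
  have h2 : (∏ i : Fin N, Matrix.vandermonde (fun k => (X k : MvPolynomial (Fin N) ℝ) ^ 2) (σ i) i)
      * ∏ i : Fin N, (X (σ i) : MvPolynomial (Fin N) ℝ)
      = ∏ i : Fin N, (X (σ i) : MvPolynomial (Fin N) ℝ) ^ (2 * (i : ℕ) + 1) := by
    rw [← Finset.prod_mul_distrib]
    refine Finset.prod_congr rfl fun i _ => ?_
    rw [Matrix.vandermonde_apply, ← pow_mul, pow_succ]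
  have h3 : (∏ i : Fin N, (X (σ i) : MvPolynomial (Fin N) ℝ) ^ (2 * (i : ℕ) + 1))
      = monomial (typeCE N σ) (1 : ℝ) := by
    rw [typeCE, MvPolynomial.monomial_sum_one]
    exact Finset.prod_congr rfl fun i _ => X_pow_eq_monomial
  rw [mul_assoc, h1, h2, h3]
  rw [show ((Equiv.Perm.sign σ : ℤ) : MvPolynomial (Fin N) ℝ)
      = C (((Equiv.Perm.sign σ : ℤ) : ℝ)) from (map_intCast (C : ℝ →+* MvPolynomial (Fin N) ℝ) _).symm, C_mul_monomial, mul_one]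

lemma typeCE_apply (N : ℕ) (σ : Equiv.Perm (Fin N)) (i : Fin N) :
    typeCE N σ (σ i) = 2 * (i : ℕ) + 1 := by
  rw [typeCE, sum_single_comp_apply]
  simp

lemma typeC_laplacian (N : ℕ) :
    (∑ j : Fin N, pderiv j (pderiv j (typeCP N))) = 0 := by
  classical
  rw [typeCP_eq]
  simp only [map_sum, pderiv_monomial]
  rw [Finset.sum_comm]
  have hre : ∀ σ : Equiv.Perm (Fin N),
      (∑ j : Fin N, (monomial (typeCE N σ - Finsupp.single j 1 - Finsupp.single j 1))
        (((Equiv.Perm.sign σ : ℤ) : ℝ) * (typeCE N σ) j *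
          ((typeCE N σ - Finsupp.single j 1 : Fin N →₀ ℕ) j)))
      = ∑ i : Fin N, (monomial (typeCE N σ - Finsupp.single (σ i) 1 - Finsupp.single (σ i) 1))
        (((Equiv.Perm.sign σ : ℤ) : ℝ) * (typeCE N σ) (σ i) *
          ((typeCE N σ - Finsupp.single (σ i) 1 : Fin N →₀ ℕ) (σ i))) :=
    fun σ => (Equiv.sum_comp σ _).symm
  rw [Finset.sum_congr rfl fun σ _ => hre σ, Finset.sum_comm]
  refine Finset.sum_eq_zero fun i _ => ?_
  have hE : ∀ σ : Equiv.Perm (Fin N), (typeCE N σ) (σ i) = 2 * (i : ℕ) + 1 := fun σ => typeCE_apply N σ i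
  have hE' : ∀ σ : Equiv.Perm (Fin N), ((typeCE N σ - Finsupp.single (σ i) 1 : Fin N →₀ ℕ) (σ i)) = 2 * (i : ℕ) := by
    intro σ
    rw [Finsupp.tsub_apply, hE, Finsupp.single_eq_same]
    omega
  rcases Nat.eq_zero_or_pos (i : ℕ) with hi | hi
  · refine Finset.sum_eq_zero fun σ _ => ?_
    rw [hE', hi]
    simp
  -- now i ≥ 1 : determinant with two equal columns
  have hiN : (i : ℕ) - 1 < N := lt_of_le_of_lt (Nat.sub_le _ _) i.isLt
  set i' : Fin N := ⟨(i : ℕ) - 1, hiN⟩ with hi'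
  have hne : i' ≠ i := by
    intro h
    have := congrArg Fin.val h
    simp only [hi'] at this
    omega
  set b : Fin N → ℕ := fun k => if k = i then 2 * (i : ℕ) - 1 else 2 * (k : ℕ) + 1 with hb
  have hD : ∀ σ : Equiv.Perm (Fin N),
      typeCE N σ - Finsupp.single (σ i) 1 - Finsupp.single (σ i) 1
        = ∑ k : Fin N, Finsupp.single (σ k) (b k) := by
    intro σ
    ext j
    rw [Finsupp.tsub_apply, Finsupp.tsub_apply, typeCE, sum_single_comp_apply,
      sum_single_comp_apply]
    rcases eq_or_ne j (σ i) with rfl | h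
    · simp only [Equiv.symm_apply_apply, Finsupp.single_eq_same, hb, if_pos rfl]
      omega
    · have h2 : σ.symm j ≠ i := fun hc => h (by rw [← hc, Equiv.apply_symm_apply])
      rw [Finsupp.single_apply, if_neg (fun hc => h hc.symm)]
      simp only [hb, if_neg h2]
      omega
  have hdet : (∑ σ : Equiv.Perm (Fin N), ((Equiv.Perm.sign σ : ℤ) : MvPolynomial (Fin N) ℝ) *
      ∏ k : Fin N, (X (σ k) : MvPolynomial (Fin N) ℝ) ^ (b k)) = 0 := by
    have hz : (Matrix.of fun j k => (X j : MvPolynomial (Fin N) ℝ) ^ (b k)).det = 0 := by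
      refine Matrix.det_zero_of_column_eq hne fun k => ?_
      simp only [Matrix.of_apply]
      congr 1
      have hne' : (⟨(i:ℕ) - 1, hiN⟩ : Fin N) ≠ i := hne
      simp only [hb, if_neg hne, if_pos rfl, hi', if_neg hne', Fin.val_mk]
      omega
    rw [Matrix.det_apply'] at hz
    simpa using hz
  calc (∑ σ : Equiv.Perm (Fin N), (monomial (typeCE N σ - Finsupp.single (σ i) 1 - Finsupp.single (σ i) 1))
        (((Equiv.Perm.sign σ : ℤ) : ℝ) * (typeCE N σ) (σ i) *
          ((typeCE N σ - Finsupp.single (σ i) 1 : Fin N →₀ ℕ) (σ i))))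
      = ∑ σ : Equiv.Perm (Fin N), C ((((2 * (i:ℕ) + 1 : ℕ) : ℝ)) * ((2 * (i:ℕ) : ℕ) : ℝ)) *
          (((Equiv.Perm.sign σ : ℤ) : MvPolynomial (Fin N) ℝ) *
            ∏ k : Fin N, (X (σ k) : MvPolynomial (Fin N) ℝ) ^ (b k)) := by
        refine Finset.sum_congr rfl fun σ _ => ?_
        rw [hE, hE', hD]
        rw [show ((Equiv.Perm.sign σ : ℤ) : MvPolynomial (Fin N) ℝ)
            = C (((Equiv.Perm.sign σ : ℤ) : ℝ)) from
          (map_intCast (C : ℝ →+* MvPolynomial (Fin N) ℝ) _).symm]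
        rw [show (∏ k : Fin N, (X (σ k) : MvPolynomial (Fin N) ℝ) ^ b k)
            = monomial (∑ k : Fin N, Finsupp.single (σ k) (b k)) (1 : ℝ) from by
          rw [MvPolynomial.monomial_sum_one (R := ℝ) Finset.univ (fun k => Finsupp.single (σ k) (b k))]
          exact Finset.prod_congr rfl fun k _ => X_pow_eq_monomial]
        rw [C_mul_monomial, C_mul_monomial]
        congr 1
        push_cast
        ring
    _ = C ((((2 * (i:ℕ) + 1 : ℕ) : ℝ)) * ((2 * (i:ℕ) : ℕ) : ℝ)) *
          ∑ σ : Equiv.Perm (Fin N), (((Equiv.Perm.sign σ : ℤ) : MvPolynomial (Fin N) ℝ) *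
            ∏ k : Fin N, (X (σ k) : MvPolynomial (Fin N) ℝ) ^ (b k)) := by
        rw [Finset.mul_sum]
    _ = 0 := by rw [hdet, mul_zero]

lemma eval_update_deriv {N : ℕ} (x : Fin N → ℝ) (i : Fin N) (Q : MvPolynomial (Fin N) ℝ)
    (s : ℝ) :
    deriv (fun u : ℝ => MvPolynomial.eval (Function.update x i u) Q) s
      = MvPolynomial.eval (Function.update x i s) (pderiv i Q) := by
  classical
  set φ : MvPolynomial (Fin N) ℝ →ₐ[ℝ] Polynomial ℝ :=
    MvPolynomial.aeval (fun j => if j = i then Polynomial.X else Polynomial.C (x j)) with hφ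
  have hval : ∀ (Q : MvPolynomial (Fin N) ℝ) (u : ℝ),
      Polynomial.eval u (φ Q) = MvPolynomial.eval (Function.update x i u) Q := by
    intro Q u
    have hcomp : (Polynomial.aeval u : Polynomial ℝ →ₐ[ℝ] ℝ).comp φ
        = MvPolynomial.aeval (Function.update x i u) := by
      rw [hφ, MvPolynomial.comp_aeval]
      congr 1
      funext j
      by_cases h : j = i
      · subst h; simp [Function.update]
      · simp [h, Function.update]
    calc Polynomial.eval u (φ Q) = (Polynomial.aeval u : Polynomial ℝ →ₐ[ℝ] ℝ) (φ Q) := by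
          rw [Polynomial.coe_aeval_eq_eval]
      _ = ((Polynomial.aeval u : Polynomial ℝ →ₐ[ℝ] ℝ).comp φ) Q := rfl
      _ = MvPolynomial.aeval (Function.update x i u) Q := by rw [hcomp]
      _ = MvPolynomial.eval (Function.update x i u) Q := by
          rw [MvPolynomial.aeval_def, MvPolynomial.eval]
          rfl
  have hder : ∀ Q : MvPolynomial (Fin N) ℝ,
      Polynomial.derivative (φ Q) = φ (pderiv i Q) := by
    intro Q
    induction Q using MvPolynomial.induction_on with
    | C a => simp [hφ, MvPolynomial.algebraMap_eq]
    | add p q hp hq => simp [map_add, hp, hq]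
    | mul_X p j hp =>
      have hX : Polynomial.derivative (φ (MvPolynomial.X j)) = φ (pderiv i (MvPolynomial.X j)) := by
        by_cases h : j = i
        · subst h; simp [hφ]
        · simp [hφ, h, pderiv_X_of_ne h]
      rw [map_mul, Polynomial.derivative_mul, hp, pderiv_mul, map_add, map_mul, map_mul, hX]
  have hfun : (fun u : ℝ => MvPolynomial.eval (Function.update x i u) Q)
      = fun u => Polynomial.eval u (φ Q) := by funext u; exact (hval Q u).symm
  rw [hfun, Polynomial.deriv, hder, hval]

/-- The type-C Vandermonde `ĥ_N(x) = ∏_{i<j}(x_j² - x_i²) ∏_i x_i` is harmonic on `ℝ^N`. -/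
theorem typeC_vandermonde_harmonic (N : ℕ) (x : Fin N → ℝ) :
    (∑ i : Fin N,
        deriv (fun s : ℝ =>
          deriv (fun u : ℝ =>
            (∏ k : Fin N, ∏ l ∈ Finset.Ioi k,
              (Function.update x i u l ^ 2 - Function.update x i u k ^ 2)) *
            ∏ k : Fin N, Function.update x i u k) s) (x i)) = 0 := by
  have hfun : ∀ (i : Fin N) (u : ℝ),
      (∏ k : Fin N, ∏ l ∈ Finset.Ioi k,
        (Function.update x i u l ^ 2 - Function.update x i u k ^ 2)) *
      ∏ k : Fin N, Function.update x i u k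
        = MvPolynomial.eval (Function.update x i u) (typeCP N) := by
    intro i u
    simp [typeCP]
  have hterm : ∀ i : Fin N,
      deriv (fun s : ℝ =>
        deriv (fun u : ℝ =>
          (∏ k : Fin N, ∏ l ∈ Finset.Ioi k,
            (Function.update x i u l ^ 2 - Function.update x i u k ^ 2)) *
          ∏ k : Fin N, Function.update x i u k) s) (x i)
      = MvPolynomial.eval x (pderiv i (pderiv i (typeCP N))) := by
    intro i
    have h1 : (fun s : ℝ =>
        deriv (fun u : ℝ =>
          (∏ k : Fin N, ∏ l ∈ Finset.Ioi k,
            (Function.update x i u l ^ 2 - Function.update x i u k ^ 2)) *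
          ∏ k : Fin N, Function.update x i u k) s)
        = fun s : ℝ => MvPolynomial.eval (Function.update x i s) (pderiv i (typeCP N)) := by
      funext s
      rw [show (fun u : ℝ =>
          (∏ k : Fin N, ∏ l ∈ Finset.Ioi k,
            (Function.update x i u l ^ 2 - Function.update x i u k ^ 2)) *
          ∏ k : Fin N, Function.update x i u k)
        = fun u : ℝ => MvPolynomial.eval (Function.update x i u) (typeCP N) from
          funext fun u => hfun i u]
      exact eval_update_deriv x i (typeCP N) s
    rw [h1, eval_update_deriv x i (pderiv i (typeCP N)) (x i), Function.update_eq_self]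
  rw [Finset.sum_congr rfl fun i _ => hterm i, ← map_sum, typeC_laplacian]
  simp
end

section
/- For positive integers m, and integers u_1 < u_2 < ... < u_N, v_1 < v_2 < ... < v_N with u_i + m + v_j even for all i,j, the number of N-tuples of nonintersecting lattice paths of simple random walks of length m, the i-th path running from u_i to v_i, equals det_{1≤i,j≤N}( C(m, (m + u_j - v_i)/2) ), where C(n,k) is the binomial coefficient (interpreted as 0 when (m+u_j-v_i)/2 is not an integer in [0,m]). -/
open Finset

namespace LGV

variable {m : ℕ}

/-- step value of a boolean step sequence (junk value 1 beyond `m`). -/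
def stp (m : ℕ) (s : Fin m → Bool) (t : ℕ) : ℤ :=
  if h : t < m then (if s ⟨t, h⟩ then 1 else -1) else 1

/-- walk position after `k` steps starting at `a`. -/
def W (m : ℕ) (a : ℤ) (s : Fin m → Bool) (k : ℕ) : ℤ :=
  a + ∑ t ∈ Finset.range k, stp m s t

lemma stp_eq (s : Fin m → Bool) (t : ℕ) : stp m s t = 1 ∨ stp m s t = -1 := by
  unfold stp; split_ifs <;> simp

lemma abs_stp (s : Fin m → Bool) (t : ℕ) : |stp m s t| = 1 := by
  rcases stp_eq s t with h | h <;> rw [h] <;> simp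

lemma W_zero (a : ℤ) (s : Fin m → Bool) : W m a s 0 = a := by simp [W]

lemma W_succ (a : ℤ) (s : Fin m → Bool) (k : ℕ) :
    W m a s (k + 1) = W m a s k + stp m s k := by
  simp [W, Finset.sum_range_succ, add_assoc]

lemma W_even (a : ℤ) (s : Fin m → Bool) (k : ℕ) : Even (W m a s k + a + k) := by
  induction k with
  | zero => simpa [W_zero] using even_add_self a
  | succ k ih =>
      have h : W m a s (k+1) + a + ((k+1 : ℕ) : ℤ) =
          (W m a s k + a + k) + (stp m s k + 1) := by
        rw [W_succ]; push_cast; ring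
      rw [h]
      rcases stp_eq s k with h' | h' <;> rw [h']
      · exact ih.add ⟨1, rfl⟩
      · have h2 : W m a s k + a + (k:ℤ) + (-1 + 1) = W m a s k + a + k := by ring
        rw [h2]; exact ih

lemma W_split (a : ℤ) (s : Fin m → Bool) {k' k : ℕ} (h : k' ≤ k) :
    W m a s k = W m a s k' + ∑ t ∈ Finset.Ico k' k, stp m s t := by
  rw [W, W, add_assoc, Finset.sum_range_add_sum_Ico _ h]

lemma W_abs_le (a : ℤ) (s : Fin m → Bool) (k : ℕ) : |W m a s k - a| ≤ k := by
  simp only [W, add_sub_cancel_left]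
  calc |∑ t ∈ Finset.range k, stp m s t| ≤ ∑ t ∈ Finset.range k, |stp m s t| :=
        Finset.abs_sum_le_sum_abs _ _
    _ = k := by simp [abs_stp]

lemma W_final (a : ℤ) (s : Fin m → Bool) :
    W m a s m = a + 2 * ((univ.filter (fun i => s i)).card : ℤ) - m := by
  have h1 : ∑ t ∈ Finset.range m, stp m s t = ∑ i : Fin m, (if s i then (1:ℤ) else -1) := by
    rw [← Fin.sum_univ_eq_sum_range (fun t => stp m s t) m]
    refine Finset.sum_congr rfl fun i _ => ?_
    simp [stp, i.isLt]
  have h2 : ∀ i : Fin m, (if s i then (1:ℤ) else -1) = 2 * (if s i then (1:ℤ) else 0) - 1 := by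
    intro i; split <;> ring
  rw [W, h1]
  simp only [h2]
  rw [Finset.sum_sub_distrib, ← Finset.mul_sum, Finset.sum_boole]
  simp [mul_comm]
  ring

lemma card_T (m k : ℕ) :
    ((univ : Finset (Fin m → Bool)).filter
      (fun s => (univ.filter (fun i => s i)).card = k)).card = m.choose k := by
  classical
  have key : ((univ : Finset (Fin m → Bool)).filter
      (fun s => (univ.filter (fun i => s i)).card = k)).card
      = (Finset.powersetCard k (univ : Finset (Fin m))).card := by
    apply Finset.card_bij (fun s _ => univ.filter (fun i => s i))
    · intro s hs
      rw [Finset.mem_powersetCard]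
      exact ⟨Finset.filter_subset _ _, (Finset.mem_filter.mp hs).2⟩
    · intro s hs s' hs' h
      funext i
      have h2 := Finset.ext_iff.mp h i
      simp only [Finset.mem_filter, Finset.mem_univ, true_and] at h2
      cases hsi : s i <;> cases hsi' : s' i <;> simp_all
    · intro A hA
      rw [Finset.mem_powersetCard] at hA
      refine ⟨fun i => decide (i ∈ A), ?_, ?_⟩
      · simp only [Finset.mem_filter, Finset.mem_univ, true_and, decide_eq_true_eq]
        rw [← hA.2]; congr 1; ext i
        simp only [Finset.mem_filter, Finset.mem_univ, true_and]
      · ext i; simp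
  rw [key, Finset.card_powersetCard, Finset.card_univ, Fintype.card_fin]

lemma count_paths (m : ℕ) (a b : ℤ) (hab : Even (a + m + b)) :
    (((univ : Finset (Fin m → Bool)).filter (fun s => W m a s m = b)).card : ℤ) =
      if 0 ≤ (m:ℤ) + a - b then (m.choose ((((m:ℤ) + a - b)/2).toNat) : ℤ) else 0 := by
  classical
  set d : ℤ := (m:ℤ) + b - a with hd
  have hdeven : Even d := by
    have : d = (a + m + b) - 2 * a := by rw [hd]; ring
    rw [this]
    exact hab.sub ⟨a, (two_mul a)⟩
  have hd2 : 2 * (d / 2) = d := Int.two_mul_ediv_two_of_even hdeven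
  by_cases h1 : 0 ≤ d
  · by_cases h2 : d ≤ 2 * m
    · -- main case
      set k : ℕ := (d / 2).toNat with hk
      have hdk : (k : ℤ) = d / 2 := Int.toNat_of_nonneg (by positivity)
      have hkm : k ≤ m := by
        have : (k : ℤ) ≤ m := by
          rw [hdk]
          omega
        exact_mod_cast this
      have hfe : ((univ : Finset (Fin m → Bool)).filter (fun s => W m a s m = b)) =
          ((univ : Finset (Fin m → Bool)).filter
            (fun s => (univ.filter (fun i => s i)).card = k)) := by
        apply Finset.filter_congr
        intro s _
        rw [W_final]
        constructor
        · intro h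
          have h3 : 2 * ((univ.filter (fun i => s i)).card : ℤ) = d := by omega
          have : ((univ.filter (fun i => s i)).card : ℤ) = (k : ℤ) := by omega
          exact_mod_cast this
        · intro h
          rw [h, hdk]
          omega
      rw [hfe, card_T]
      have hcond : 0 ≤ (m:ℤ) + a - b := by omega
      rw [if_pos hcond]
      have he : (((m:ℤ) + a - b)/2).toNat = m - k := by
        have h3 : (m:ℤ) + a - b = 2 * ((m:ℤ) - k) := by rw [hdk]; omega
        rw [h3]
        rw [Int.mul_ediv_cancel_left _ (by norm_num)]
        omega
      rw [he, Nat.choose_symm hkm]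
    · -- d > 2m : filter empty and RHS zero
      have hcond : ¬ (0 ≤ (m:ℤ) + a - b) := by omega
      rw [if_neg hcond]
      have hemp : ((univ : Finset (Fin m → Bool)).filter (fun s => W m a s m = b)) = ∅ := by
        apply Finset.filter_false_of_mem
        intro s _
        intro h
        have h6 := abs_le.mp (W_abs_le a s m)
        rw [h] at h6
        omega
      rw [hemp]
      simp
  · -- d < 0 : filter empty, RHS has choose beyond m
    have hcond : 0 ≤ (m:ℤ) + a - b := by omega
    rw [if_pos hcond]
    have hemp : ((univ : Finset (Fin m → Bool)).filter (fun s => W m a s m = b)) = ∅ := by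
      apply Finset.filter_false_of_mem
      intro s _
      intro h
      have h6 := abs_le.mp (W_abs_le a s m)
      rw [h] at h6
      omega
    rw [hemp]
    have hbig : m < (((m:ℤ) + a - b)/2).toNat := by
      have h3 : (m:ℤ) + a - b = 2 * ((m:ℤ) - d / 2) := by omega
      have h4 : (((m:ℤ) + a - b)/2) = (m:ℤ) - d/2 := by
        rw [h3, Int.mul_ediv_cancel_left _ (by norm_num)]
      have h5 : d / 2 < 0 := by omega
      rw [h4]
      omega
    rw [Nat.choose_eq_zero_of_lt hbig]
    simp

section Main

variable {N : ℕ} {m : ℕ} (u v : Fin N → ℤ)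

/-- position of path `i` at time `k` in tuple-of-step-sequences encoding. -/
def P (m : ℕ) (u : Fin N → ℤ) (s : Fin N → Fin m → Bool) (i : Fin N) (k : ℕ) : ℤ :=
  W m (u i) (s i) k

/-- "no two paths meet" predicate. -/
def Dns (m : ℕ) (u : Fin N → ℤ) (s : Fin N → Fin m → Bool) : Prop :=
  ∀ k ≤ m, ∀ i j : Fin N, P m u s i k = P m u s j k → i = j

lemma P_diff_even (hpar : ∀ i j : Fin N, Even (u i + m + v j))
    (s : Fin N → Fin m → Bool) (i j : Fin N) (k : ℕ) :
    Even (P m u s i k - P m u s j k) := by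
  have e1 := W_even (u i) (s i) k
  have e2 := W_even (u j) (s j) k
  have e3 := (hpar i i).sub (hpar j i)
  rw [Int.even_iff] at e1 e2 e3 ⊢
  unfold P
  omega

lemma ordered (hu : StrictMono u) (hpar : ∀ i j : Fin N, Even (u i + m + v j))
    (s : Fin N → Fin m → Bool) (hD : Dns m u s) :
    ∀ k ≤ m, ∀ i j : Fin N, i < j → P m u s i k < P m u s j k := by
  intro k
  induction k with
  | zero =>
      intro _ i j hij
      simpa [P, W_zero] using hu hij
  | succ k ih =>
      intro hk i j hij
      have h1 := ih (Nat.le_of_succ_le hk) i j hij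
      have heven := P_diff_even u v hpar s i j k
      rw [Int.even_iff] at heven
      have h2 : P m u s i k + 2 ≤ P m u s j k := by omega
      have hsi : P m u s i (k+1) = P m u s i k + stp m (s i) k := W_succ _ _ _
      have hsj : P m u s j (k+1) = P m u s j k + stp m (s j) k := W_succ _ _ _
      have hij' : i ≠ j := ne_of_lt hij
      have hne : P m u s i (k+1) ≠ P m u s j (k+1) := fun h => hij' (hD (k+1) hk i j h)
      rcases stp_eq (s i) k with hi' | hi' <;> rcases stp_eq (s j) k with hj' | hj' <;>
        rw [hi'] at hsi <;> rw [hj'] at hsj <;> omega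

lemma sigma_eq_one (hu : StrictMono u) (hv : StrictMono v)
    (hpar : ∀ i j : Fin N, Even (u i + m + v j))
    (σ : Equiv.Perm (Fin N)) (s : Fin N → Fin m → Bool)
    (hE : ∀ i, P m u s i m = v (σ i)) (hD : Dns m u s) : σ = 1 := by
  have hmono : StrictMono (σ : Fin N → Fin N) := by
    intro i j hij
    have h1 := ordered u v hu hpar s hD m le_rfl i j hij
    rw [hE i, hE j] at h1
    exact hv.lt_iff_lt.mp h1
  have hrange : Set.range (σ : Fin N → Fin N) = Set.range (id : Fin N → Fin N) := by
    rw [σ.surjective.range_eq, Set.range_id]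
  have : (σ : Fin N → Fin N) = id :=
    (hmono.range_inj strictMono_id).mp hrange
  exact Equiv.ext fun x => congrFun this x

/-! ### Tail swapping -/

def splice (m k0 : ℕ) (x y : Fin m → Bool) : Fin m → Bool :=
  fun t => if (t : ℕ) < k0 then x t else y t

lemma stp_splice (k0 : ℕ) (x y : Fin m → Bool) (t : ℕ) :
    stp m (splice m k0 x y) t = if t < k0 then stp m x t else stp m y t := by
  by_cases hm' : t < m
  · by_cases hk : t < k0 <;> simp [stp, splice, hm', hk]
  · by_cases hk : t < k0 <;> simp [stp, hm', hk]

lemma W_splice_le (a : ℤ) (x y : Fin m → Bool) {k k0 : ℕ} (h : k ≤ k0) :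
    W m a (splice m k0 x y) k = W m a x k := by
  unfold W
  congr 1
  refine Finset.sum_congr rfl fun t ht => ?_
  rw [stp_splice, if_pos (lt_of_lt_of_le (Finset.mem_range.mp ht) h)]

lemma W_splice_ge (a a' : ℤ) (x y : Fin m → Bool) {k0 k : ℕ} (h : k0 ≤ k)
    (hagree : W m a x k0 = W m a' y k0) :
    W m a (splice m k0 x y) k = W m a' y k := by
  rw [W_split a (splice m k0 x y) h, W_split a' y h, W_splice_le a x y le_rfl, hagree]
  congr 1
  refine Finset.sum_congr rfl fun t ht => ?_
  rw [stp_splice, if_neg (by simpa using (Finset.mem_Ico.mp ht).1)]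

/-- the swapped tuple of step sequences. -/
def swapS (m : ℕ) (s : Fin N → Fin m → Bool) (k0 : ℕ) (i0 j0 : Fin N) :
    Fin N → Fin m → Bool := fun i =>
  if i = i0 then splice m k0 (s i0) (s j0)
  else if i = j0 then splice m k0 (s j0) (s i0) else s i

/-- specification of the canonical (lexicographically first) meeting data. -/
def Spec (m : ℕ) (u : Fin N → ℤ) (s : Fin N → Fin m → Bool)
    (t : Fin (m+1) × Fin N × Fin N) : Prop :=
  t.2.1 ≠ t.2.2 ∧ P m u s t.2.1 t.1 = P m u s t.2.2 t.1 ∧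
  (∀ k : Fin (m+1), k < t.1 → ∀ i j : Fin N, i ≠ j → P m u s i k ≠ P m u s j k) ∧
  (∀ i < t.2.1, ∀ j : Fin N, i ≠ j → P m u s i t.1 ≠ P m u s j t.1) ∧
  (∀ j : Fin N, t.2.1 ≠ j → P m u s t.2.1 t.1 = P m u s j t.1 → t.2.2 ≤ j)

lemma spec_unique {s : Fin N → Fin m → Bool} {t t' : Fin (m+1) × Fin N × Fin N}
    (h : Spec m u s t) (h' : Spec m u s t') : t = t' := by
  obtain ⟨hne, hmeet, hk, hi, hj⟩ := h
  obtain ⟨hne', hmeet', hk', hi', hj'⟩ := h'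
  have hkk : t.1 = t'.1 := by
    by_contra hcc
    rcases lt_or_gt_of_ne hcc with hlt | hlt
    · exact hk' t.1 hlt _ _ hne hmeet
    · exact hk t'.1 hlt _ _ hne' hmeet'
  have hii : t.2.1 = t'.2.1 := by
    by_contra hcc
    rcases lt_or_gt_of_ne hcc with hlt | hlt
    · exact hi' t.2.1 hlt _ hne (hkk ▸ hmeet)
    · exact hi t'.2.1 hlt _ hne' (hkk ▸ hmeet')
  have hjj : t.2.2 = t'.2.2 := by
    have h1 : t.2.2 ≤ t'.2.2 := hj t'.2.2 (hii ▸ hne') (by rw [hkk, hii]; exact hmeet')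
    have h2 : t'.2.2 ≤ t.2.2 := hj' t.2.2 (hii ▸ hne) (by rw [← hkk, ← hii]; exact hmeet)
    exact le_antisymm h1 h2
  exact Prod.ext hkk (Prod.ext hii hjj)

open scoped Classical in
lemma spec_exists {s : Fin N → Fin m → Bool} (h : ¬ Dns m u s) :
    ∃ t, Spec m u s t := by
  classical
  unfold Dns at h
  push_neg at h
  obtain ⟨k, hk, i, j, hmeet, hne⟩ := h
  set mtf : Finset (Fin (m+1)) :=
    univ.filter (fun k : Fin (m+1) => ∃ i j : Fin N, i ≠ j ∧
      P m u s i (k : ℕ) = P m u s j (k : ℕ)) with hmtf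
  have hmt_ne : mtf.Nonempty := by
    refine ⟨⟨k, Nat.lt_succ_of_le hk⟩, ?_⟩
    simp only [hmtf, Finset.mem_filter, Finset.mem_univ, true_and]
    exact ⟨i, j, hne, hmeet⟩
  set k0 : Fin (m+1) := mtf.min' hmt_ne with hk0
  have hk0mem : k0 ∈ mtf := mtf.min'_mem hmt_ne
  rw [hmtf, Finset.mem_filter] at hk0mem
  obtain ⟨-, i1, j1, hne1, hmeet1⟩ := hk0mem
  set cf : Finset (Fin N) :=
    univ.filter (fun i : Fin N => ∃ j : Fin N, i ≠ j ∧
      P m u s i (k0 : ℕ) = P m u s j (k0 : ℕ)) with hcf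
  have hcf_ne : cf.Nonempty := by
    refine ⟨i1, ?_⟩
    simp only [hcf, Finset.mem_filter, Finset.mem_univ, true_and]
    exact ⟨j1, hne1, hmeet1⟩
  set i0 : Fin N := cf.min' hcf_ne with hi0
  have hi0mem : i0 ∈ cf := cf.min'_mem hcf_ne
  rw [hcf, Finset.mem_filter] at hi0mem
  obtain ⟨-, j2, hne2, hmeet2⟩ := hi0mem
  set jf : Finset (Fin N) :=
    univ.filter (fun j : Fin N => i0 ≠ j ∧
      P m u s i0 (k0 : ℕ) = P m u s j (k0 : ℕ)) with hjf
  have hjf_ne : jf.Nonempty := by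
    refine ⟨j2, ?_⟩
    simp only [hjf, Finset.mem_filter, Finset.mem_univ, true_and]
    exact ⟨hne2, hmeet2⟩
  set j0 : Fin N := jf.min' hjf_ne with hj0
  have hj0mem : j0 ∈ jf := jf.min'_mem hjf_ne
  rw [hjf, Finset.mem_filter] at hj0mem
  obtain ⟨-, hne0, hmeet0⟩ := hj0mem
  refine ⟨(k0, i0, j0), hne0, hmeet0, ?_, ?_, ?_⟩
  · intro k' hk' a b hab hPab
    have : k' ∈ mtf := by
      simp only [hmtf, Finset.mem_filter, Finset.mem_univ, true_and]
      exact ⟨a, b, hab, hPab⟩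
    exact absurd (mtf.min'_le _ this) (not_le.mpr hk')
  · intro a ha b hab hPab
    have : a ∈ cf := by
      simp only [hcf, Finset.mem_filter, Finset.mem_univ, true_and]
      exact ⟨b, hab, hPab⟩
    exact absurd (cf.min'_le _ this) (not_le.mpr ha)
  · intro b hb hPb
    apply jf.min'_le
    simp only [hjf, Finset.mem_filter, Finset.mem_univ, true_and]
    exact ⟨hb, hPb⟩

open scoped Classical in
noncomputable def md (m : ℕ) (u : Fin N → ℤ) (s : Fin N → Fin m → Bool) :
    Option (Fin (m+1) × Fin N × Fin N) :=
  if h : ∃ t, Spec m u s t then some h.choose else none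

lemma md_eq {s : Fin N → Fin m → Bool} {t : Fin (m+1) × Fin N × Fin N}
    (h : Spec m u s t) : md m u s = some t := by
  unfold md
  rw [dif_pos ⟨t, h⟩]
  exact congrArg some (spec_unique u (Exists.choose_spec (⟨t, h⟩ : ∃ t, Spec m u s t)) h)

section Swap

variable {s : Fin N → Fin m → Bool} {k0 : Fin (m+1)} {i0 j0 : Fin N}

lemma P_swap_agree_le (hne : i0 ≠ j0) (i : Fin N) {k : ℕ} (hk : k ≤ (k0 : ℕ)) :
    P m u (swapS m s (k0 : ℕ) i0 j0) i k = P m u s i k := by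
  by_cases hi : i = i0
  · subst hi; unfold P swapS; rw [if_pos rfl]; exact W_splice_le _ _ _ hk
  · by_cases hj : i = j0
    · subst hj; unfold P swapS; rw [if_neg hi, if_pos rfl]; exact W_splice_le _ _ _ hk
    · unfold P swapS; rw [if_neg hi, if_neg hj]

lemma P_swap_i0 (hne : i0 ≠ j0) (hmeet : P m u s i0 (k0 : ℕ) = P m u s j0 (k0 : ℕ))
    {k : ℕ} (hk : (k0 : ℕ) ≤ k) :
    P m u (swapS m s (k0 : ℕ) i0 j0) i0 k = P m u s j0 k := by
  unfold P swapS
  rw [if_pos rfl]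
  exact W_splice_ge _ _ _ _ hk hmeet

lemma P_swap_j0 (hne : i0 ≠ j0) (hmeet : P m u s i0 (k0 : ℕ) = P m u s j0 (k0 : ℕ))
    {k : ℕ} (hk : (k0 : ℕ) ≤ k) :
    P m u (swapS m s (k0 : ℕ) i0 j0) j0 k = P m u s i0 k := by
  unfold P swapS
  rw [if_neg (Ne.symm hne), if_pos rfl]
  exact W_splice_ge _ _ _ _ hk hmeet.symm

lemma P_swap_other (hi : i ≠ i0) (hj : i ≠ j0) (k : ℕ) :
    P m u (swapS m s (k0 : ℕ) i0 j0) i k = P m u s i k := by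
  unfold P swapS
  rw [if_neg hi, if_neg hj]

lemma swap_spec (hSpec : Spec m u s (k0, i0, j0)) :
    Spec m u (swapS m s (k0 : ℕ) i0 j0) (k0, i0, j0) := by
  obtain ⟨hne, hmeet, hkmin, himin, hjmin⟩ := hSpec
  have hAg : ∀ i : Fin N, ∀ k : ℕ, k ≤ (k0 : ℕ) →
      P m u (swapS m s (k0 : ℕ) i0 j0) i k = P m u s i k :=
    fun i k hk => P_swap_agree_le u hne i hk
  refine ⟨hne, ?_, ?_, ?_, ?_⟩
  · rw [hAg i0 _ le_rfl, hAg j0 _ le_rfl]; exact hmeet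
  · intro k hk i j hij
    rw [hAg i _ (le_of_lt hk), hAg j _ (le_of_lt hk)]
    exact hkmin k hk i j hij
  · intro i hi j hij
    rw [hAg i _ le_rfl, hAg j _ le_rfl]
    exact himin i hi j hij
  · intro j hj
    rw [hAg i0 _ le_rfl, hAg j _ le_rfl]
    exact hjmin j hj

lemma swap_swap (hne : i0 ≠ j0) :
    swapS m (swapS m s (k0 : ℕ) i0 j0) (k0 : ℕ) i0 j0 = s := by
  funext i t
  by_cases hi : i = i0
  · subst hi
    by_cases ht : (t : ℕ) < (k0 : ℕ) <;>
      simp [swapS, splice, ht, Ne.symm hne]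
  · by_cases hj : i = j0
    · subst hj
      by_cases ht : (t : ℕ) < (k0 : ℕ) <;>
        simp [swapS, splice, ht, hi, Ne.symm hne]
    · simp [swapS, splice, hi, hj]

end Swap

open scoped Classical in
/-- the involution on configurations. -/
noncomputable def G (m : ℕ) (u : Fin N → ℤ)
    (c : Equiv.Perm (Fin N) × (Fin N → Fin m → Bool)) :
    Equiv.Perm (Fin N) × (Fin N → Fin m → Bool) :=
  match md m u c.2 with
  | none => c
  | some t => (c.1 * Equiv.swap t.2.1 t.2.2, swapS m c.2 (t.1 : ℕ) t.2.1 t.2.2)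

lemma G_eq {c : Equiv.Perm (Fin N) × (Fin N → Fin m → Bool)}
    {t : Fin (m+1) × Fin N × Fin N} (h : Spec m u c.2 t) :
    G m u c = (c.1 * Equiv.swap t.2.1 t.2.2, swapS m c.2 (t.1 : ℕ) t.2.1 t.2.2) := by
  unfold G
  rw [md_eq u h]

open scoped Classical in
lemma cancel :
    ∑ c ∈ (univ : Finset (Equiv.Perm (Fin N) × (Fin N → Fin m → Bool))).filter
        (fun c => (∀ i, P m u c.2 i m = v (c.1 i)) ∧ ¬ Dns m u c.2),
      ((Equiv.Perm.sign c.1 : ℤˣ) : ℤ) = 0 := by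
  classical
  apply Finset.sum_involution (fun c _ => G m u c)
  · -- sign cancellation
    intro c hc
    rw [Finset.mem_filter] at hc
    obtain ⟨t, ht⟩ := spec_exists u hc.2.2
    rw [G_eq u ht]
    simp only [Equiv.Perm.sign_mul, Equiv.Perm.sign_swap ht.1]
    push_cast
    ring
  · -- not a fixed point
    intro c hc hfne hEq
    rw [Finset.mem_filter] at hc
    obtain ⟨t, ht⟩ := spec_exists u hc.2.2
    rw [G_eq u ht] at hEq
    have h1 : c.1 * Equiv.swap t.2.1 t.2.2 = c.1 := congrArg Prod.fst hEq
    have h2 : Equiv.swap t.2.1 t.2.2 = 1 :=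
      mul_left_cancel (a := c.1) (by rw [mul_one]; exact h1)
    exact ht.1 (Equiv.swap_eq_one_iff.mp h2)
  · -- maps the set to itself
    intro c hc
    rw [Finset.mem_filter] at hc ⊢
    obtain ⟨huniv, hE, hnD⟩ := hc
    obtain ⟨t, ht⟩ := spec_exists u hnD
    obtain ⟨k0, i0, j0⟩ := t
    rw [G_eq u ht]
    have hne : i0 ≠ j0 := ht.1
    have hmeet : P m u c.2 i0 (k0 : ℕ) = P m u c.2 j0 (k0 : ℕ) := ht.2.1
    refine ⟨Finset.mem_univ _, ?_, ?_⟩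
    · intro i
      by_cases hi : i = i0
      · subst hi
        rw [P_swap_i0 u hne hmeet (Fin.is_le k0)]
        simp [Equiv.swap_apply_left, hE j0]
      · by_cases hj : i = j0
        · subst hj
          rw [P_swap_j0 u hne hmeet (Fin.is_le k0)]
          simp [Equiv.swap_apply_right, hE i0]
        · rw [P_swap_other u hi hj]
          simp [Equiv.swap_apply_of_ne_of_ne hi hj, hE i]
    · intro hD
      apply hne
      apply hD (k0 : ℕ) (Fin.is_le k0)
      rw [P_swap_agree_le u hne i0 le_rfl, P_swap_agree_le u hne j0 le_rfl]
      exact hmeet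
  · -- involution
    intro c hc
    rw [Finset.mem_filter] at hc
    obtain ⟨t, ht⟩ := spec_exists u hc.2.2
    obtain ⟨k0, i0, j0⟩ := t
    rw [G_eq u ht]
    have hspec' : Spec m u (swapS m c.2 (k0 : ℕ) i0 j0) (k0, i0, j0) := swap_spec u ht
    rw [G_eq u (c := (c.1 * Equiv.swap i0 j0, swapS m c.2 (k0 : ℕ) i0 j0)) hspec']
    ext1
    · simp [mul_assoc]
    · exact swap_swap ht.1

open scoped Classical in
lemma card_eq (hu : StrictMono u) (hpar : ∀ i j : Fin N, Even (u i + m + v j)) :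
    Nat.card {S : Fin N → Fin (m + 1) → ℤ //
        (∀ i, S i 0 = u i) ∧
        (∀ i, S i (Fin.last m) = v i) ∧
        (∀ i, ∀ k : Fin m, |S i k.succ - S i k.castSucc| = 1) ∧
        (∀ k : Fin (m + 1), StrictMono fun i => S i k)} =
    ((univ : Finset (Fin N → Fin m → Bool)).filter
      (fun s => (∀ i, P m u s i m = v i) ∧ Dns m u s)).card := by
  classical
  -- the reconstruction lemma
  have key : ∀ (S : Fin N → Fin (m+1) → ℤ), (∀ i, S i 0 = u i) →
      (∀ i, ∀ k : Fin m, |S i k.succ - S i k.castSucc| = 1) →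
      ∀ (i : Fin N) (k : ℕ) (hk : k ≤ m),
      P m u (fun i' (t : Fin m) => decide (S i' t.succ = S i' t.castSucc + 1)) i k
        = S i ⟨k, Nat.lt_succ_of_le hk⟩ := by
    intro S h0 hstep i k
    induction k with
    | zero =>
        intro hk
        have h1 : (⟨0, Nat.lt_succ_of_le hk⟩ : Fin (m+1)) = 0 := rfl
        rw [h1, h0 i]
        exact W_zero _ _
    | succ k ih =>
        intro hk
        have hkm : k < m := hk
        have h1 : P m u (fun i' (t : Fin m) => decide (S i' t.succ = S i' t.castSucc + 1)) i (k+1)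
            = P m u (fun i' (t : Fin m) => decide (S i' t.succ = S i' t.castSucc + 1)) i k
              + stp m (fun t : Fin m => decide (S i t.succ = S i t.castSucc + 1)) k :=
          W_succ _ _ _
        rw [h1, ih (Nat.le_of_succ_le hk)]
        have habs := hstep i ⟨k, hkm⟩
        have hsucc : (⟨k, hkm⟩ : Fin m).succ = ⟨k+1, Nat.lt_succ_of_le hk⟩ := rfl
        have hcast : (⟨k, hkm⟩ : Fin m).castSucc
            = ⟨k, Nat.lt_succ_of_le (Nat.le_of_succ_le hk)⟩ := rfl
        rw [hsucc, hcast] at habs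
        have habs' := (abs_eq (by norm_num : (0:ℤ) ≤ 1)).mp habs
        unfold stp
        rw [dif_pos hkm]
        simp only [hsucc, hcast]
        by_cases hd : S i ⟨k+1, Nat.lt_succ_of_le hk⟩
            = S i ⟨k, Nat.lt_succ_of_le (Nat.le_of_succ_le hk)⟩ + 1
        · simp only [decide_eq_true hd]
          simp only [if_pos]
          omega
        · have hd2 : decide (S i ⟨k+1, Nat.lt_succ_of_le hk⟩
              = S i ⟨k, Nat.lt_succ_of_le (Nat.le_of_succ_le hk)⟩ + 1) = false := by
            simpa using hd
          rw [hd2]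
          simp only [Bool.false_eq_true, if_false]
          omega
  -- build the equivalence
  have e : {s : Fin N → Fin m → Bool //
        s ∈ ((univ : Finset (Fin N → Fin m → Bool)).filter
          (fun s => (∀ i, P m u s i m = v i) ∧ Dns m u s))} ≃
      {S : Fin N → Fin (m + 1) → ℤ //
        (∀ i, S i 0 = u i) ∧
        (∀ i, S i (Fin.last m) = v i) ∧
        (∀ i, ∀ k : Fin m, |S i k.succ - S i k.castSucc| = 1) ∧
        (∀ k : Fin (m + 1), StrictMono fun i => S i k)} := by
    refine
      { toFun := fun sp => ⟨fun i k => P m u sp.1 i (k : ℕ), ?_, ?_, ?_, ?_⟩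
        invFun := fun Sp =>
          ⟨fun i (t : Fin m) => decide (Sp.1 i t.succ = Sp.1 i t.castSucc + 1), ?_⟩
        left_inv := ?_
        right_inv := ?_ }
    · intro i
      simpa [P] using W_zero (u i) (sp.1 i)
    · intro i
      have hs := (Finset.mem_filter.mp sp.2).2.1 i
      simpa [Fin.val_last] using hs
    · intro i k
      show |P m u sp.1 i ((k.succ : Fin (m+1)) : ℕ)
          - P m u sp.1 i ((k.castSucc : Fin (m+1)) : ℕ)| = 1
      have h1 : P m u sp.1 i ((k.succ : Fin (m+1)) : ℕ) = P m u sp.1 i ((k:ℕ)+1) := by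
        simp [Fin.val_succ]
      have h2 : P m u sp.1 i ((k.castSucc : Fin (m+1)) : ℕ) = P m u sp.1 i (k : ℕ) := by
        simp
      have h3 : P m u sp.1 i ((k:ℕ)+1) = P m u sp.1 i (k:ℕ) + stp m (sp.1 i) (k:ℕ) :=
        W_succ _ _ _
      rw [h1, h2, h3]
      simpa using abs_stp (sp.1 i) (k : ℕ)
    · intro k i j hij
      have hD := (Finset.mem_filter.mp sp.2).2.2
      exact ordered u v hu hpar sp.1 hD (k : ℕ) (Nat.lt_succ_iff.mp k.isLt) i j hij
    · rw [Finset.mem_filter]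
      refine ⟨Finset.mem_univ _, fun i => ?_, ?_⟩
      · rw [key Sp.1 Sp.2.1 Sp.2.2.2.1 i m le_rfl]
        have : (⟨m, Nat.lt_succ_of_le le_rfl⟩ : Fin (m+1)) = Fin.last m := rfl
        rw [this]
        exact Sp.2.2.1 i
      · intro k hk i j hPij
        rw [key Sp.1 Sp.2.1 Sp.2.2.2.1 i k hk, key Sp.1 Sp.2.1 Sp.2.2.2.1 j k hk] at hPij
        exact (Sp.2.2.2.2 ⟨k, Nat.lt_succ_of_le hk⟩).injective hPij
    · -- left inverse
      rintro ⟨s, hs⟩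
      apply Subtype.ext
      funext i t
      show decide (P m u s i ((t.succ : Fin (m+1)) : ℕ)
          = P m u s i ((t.castSucc : Fin (m+1)) : ℕ) + 1) = s i t
      have h1 : P m u s i ((t.succ : Fin (m+1)) : ℕ) = P m u s i ((t : ℕ) + 1) := by
        simp [Fin.val_succ]
      have h2 : P m u s i ((t.castSucc : Fin (m+1)) : ℕ) = P m u s i (t : ℕ) := by
        simp
      have h3 : P m u s i ((t:ℕ)+1) = P m u s i (t:ℕ) + stp m (s i) (t:ℕ) := W_succ _ _ _
      rw [h1, h2, h3]
      unfold stp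
      rw [dif_pos t.isLt]
      have ht : (⟨(t : ℕ), t.isLt⟩ : Fin m) = t := Fin.eta t t.isLt
      rw [ht]
      cases hst : s i t
      · simp only [hst, Bool.false_eq_true, if_false]
        apply decide_eq_false
        omega
      · simp only [hst, if_pos rfl]
        apply decide_eq_true
        rfl
    · -- right inverse
      rintro ⟨S, hS⟩
      apply Subtype.ext
      funext i k
      show P m u (fun i' (t : Fin m) => decide (S i' t.succ = S i' t.castSucc + 1)) i (k : ℕ) = S i k
      rw [key S hS.1 hS.2.2.1 i (k : ℕ) (Nat.lt_succ_iff.mp k.isLt)]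
  rw [← Nat.card_congr e, Nat.card_eq_finsetCard]

end Main

end LGV

/-- Karlin–McGregor / Lindström–Gessel–Viennot formula: the number of `N`-tuples of
nonintersecting simple-random-walk lattice paths of length `m`, the `i`-th running
from `u i` to `v i`, equals `det ( C(m, (m + u_j - v_i)/2) )`. -/
theorem lgv_vicious_walkers (N m : ℕ) (hm : 0 < m) (u v : Fin N → ℤ)
    (hu : StrictMono u) (hv : StrictMono v)
    (hpar : ∀ i j : Fin N, Even (u i + m + v j)) :
    (Nat.card {S : Fin N → Fin (m + 1) → ℤ //
        (∀ i, S i 0 = u i) ∧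
        (∀ i, S i (Fin.last m) = v i) ∧
        (∀ i, ∀ k : Fin m, |S i k.succ - S i k.castSucc| = 1) ∧
        (∀ k : Fin (m + 1), StrictMono fun i => S i k)} : ℤ) =
      Matrix.det (Matrix.of fun i j : Fin N =>
        if 0 ≤ (m : ℤ) + u j - v i then
          (m.choose (((m : ℤ) + u j - v i) / 2).toNat : ℤ)
        else 0) := by
  classical
  rw [Matrix.det_apply']
  simp only [Int.cast_id]
  -- Step 1: entries count single paths
  have hentry : ∀ (σ : Equiv.Perm (Fin N)) (i : Fin N),
      (Matrix.of fun i j : Fin N =>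
        if 0 ≤ (m : ℤ) + u j - v i then
          (m.choose (((m : ℤ) + u j - v i) / 2).toNat : ℤ)
        else 0) (σ i) i
      = ((Finset.univ.filter
          (fun s1 : Fin m → Bool => LGV.W m (u i) s1 m = v (σ i))).card : ℤ) := by
    intro σ i
    rw [Matrix.of_apply]
    exact (LGV.count_paths m (u i) (v (σ i)) (hpar i (σ i))).symm
  -- Step 2: product over i of single path counts = count of tuples
  have hprodcard : ∀ σ : Equiv.Perm (Fin N),
      (∏ i, ((Finset.univ.filter
          (fun s1 : Fin m → Bool => LGV.W m (u i) s1 m = v (σ i))).card : ℤ))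
      = (((Finset.univ : Finset (Fin N → Fin m → Bool)).filter
          (fun s => ∀ i, LGV.P m u s i m = v (σ i))).card : ℤ) := by
    intro σ
    rw [← Nat.cast_prod]
    congr 1
    have hpi : (Finset.univ : Finset (Fin N → Fin m → Bool)).filter
          (fun s => ∀ i, LGV.P m u s i m = v (σ i))
        = Fintype.piFinset
            (fun i => Finset.univ.filter (fun s1 => LGV.W m (u i) s1 m = v (σ i))) := by
      ext f
      simp [Fintype.mem_piFinset, LGV.P]
      exact ⟨fun h => (Finset.mem_filter.mp h).2, fun h => Finset.mem_filter.mpr ⟨Finset.mem_univ _, h⟩⟩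
    rw [hpi, Fintype.card_piFinset]
  -- Step 3: signed sum over configurations
  have hA : ∑ σ : Equiv.Perm (Fin N), ((Equiv.Perm.sign σ : ℤˣ) : ℤ) *
        (((Finset.univ : Finset (Fin N → Fin m → Bool)).filter
          (fun s => ∀ i, LGV.P m u s i m = v (σ i))).card : ℤ)
      = ∑ c ∈ (Finset.univ : Finset (Equiv.Perm (Fin N) × (Fin N → Fin m → Bool))).filter
          (fun c => ∀ i, LGV.P m u c.2 i m = v (c.1 i)),
          ((Equiv.Perm.sign c.1 : ℤˣ) : ℤ) := by
    rw [Finset.sum_filter, Fintype.sum_prod_type]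
    refine Finset.sum_congr rfl fun σ _ => ?_
    have h1 : ∀ s : Fin N → Fin m → Bool,
        (if (∀ i, LGV.P m u s i m = v (σ i)) then ((Equiv.Perm.sign σ : ℤˣ) : ℤ) else 0)
        = ((Equiv.Perm.sign σ : ℤˣ) : ℤ) *
            (if (∀ i, LGV.P m u s i m = v (σ i)) then 1 else 0) := by
      intro s; split <;> ring
    rw [Finset.sum_congr rfl (fun s _ => h1 s), ← Finset.mul_sum, Finset.sum_boole]
  -- Step 4: split into nonintersecting and intersecting
  have hsplit := Finset.sum_filter_add_sum_filter_not
      ((Finset.univ : Finset (Equiv.Perm (Fin N) × (Fin N → Fin m → Bool))).filter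
        (fun c => ∀ i, LGV.P m u c.2 i m = v (c.1 i)))
      (fun c => LGV.Dns m u c.2)
      (fun c => ((Equiv.Perm.sign c.1 : ℤˣ) : ℤ))
  rw [Finset.filter_filter, Finset.filter_filter] at hsplit
  have hcancel : ∑ c ∈ (Finset.univ : Finset (Equiv.Perm (Fin N) × (Fin N → Fin m → Bool))).filter
        (fun c => (∀ i, LGV.P m u c.2 i m = v (c.1 i)) ∧ ¬ LGV.Dns m u c.2),
        ((Equiv.Perm.sign c.1 : ℤˣ) : ℤ) = 0 := LGV.cancel u v
  -- Step 5: nonintersecting configurations have σ = 1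
  have hid : ∀ c ∈ (Finset.univ : Finset (Equiv.Perm (Fin N) × (Fin N → Fin m → Bool))).filter
        (fun c => (∀ i, LGV.P m u c.2 i m = v (c.1 i)) ∧ LGV.Dns m u c.2), c.1 = 1 := by
    intro c hc
    rw [Finset.mem_filter] at hc
    exact LGV.sigma_eq_one u v hu hv hpar c.1 c.2 hc.2.1 hc.2.2
  have hsum1 : ∑ c ∈ (Finset.univ : Finset (Equiv.Perm (Fin N) × (Fin N → Fin m → Bool))).filter
        (fun c => (∀ i, LGV.P m u c.2 i m = v (c.1 i)) ∧ LGV.Dns m u c.2),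
        ((Equiv.Perm.sign c.1 : ℤˣ) : ℤ)
      = (((Finset.univ : Finset (Equiv.Perm (Fin N) × (Fin N → Fin m → Bool))).filter
        (fun c => (∀ i, LGV.P m u c.2 i m = v (c.1 i)) ∧ LGV.Dns m u c.2)).card : ℤ) := by
    have h1 : ∀ c ∈ (Finset.univ : Finset (Equiv.Perm (Fin N) × (Fin N → Fin m → Bool))).filter
        (fun c => (∀ i, LGV.P m u c.2 i m = v (c.1 i)) ∧ LGV.Dns m u c.2),
        ((Equiv.Perm.sign c.1 : ℤˣ) : ℤ) = 1 := by
      intro c hc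
      rw [hid c hc]
      simp
    rw [Finset.sum_congr rfl h1, Finset.sum_const, nsmul_eq_mul, mul_one]
  -- Step 6: card of configurations with σ = 1 equals card of tuple sets
  have hcard : ((Finset.univ : Finset (Equiv.Perm (Fin N) × (Fin N → Fin m → Bool))).filter
        (fun c => (∀ i, LGV.P m u c.2 i m = v (c.1 i)) ∧ LGV.Dns m u c.2)).card
      = ((Finset.univ : Finset (Fin N → Fin m → Bool)).filter
        (fun s => (∀ i, LGV.P m u s i m = v i) ∧ LGV.Dns m u s)).card := by
    apply Finset.card_bij (fun c _ => c.2)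
    · intro c hc
      rw [Finset.mem_filter] at hc ⊢
      have h1 := hid c (by rw [Finset.mem_filter]; exact hc)
      refine ⟨Finset.mem_univ _, fun i => ?_, hc.2.2⟩
      have := hc.2.1 i
      rw [h1] at this
      simpa using this
    · intro c hc c' hc' h2
      have h1 := hid c hc
      have h1' := hid c' hc'
      exact Prod.ext (h1.trans h1'.symm) h2
    · intro s hs
      rw [Finset.mem_filter] at hs
      refine ⟨(1, s), ?_, rfl⟩
      rw [Finset.mem_filter]
      exact ⟨Finset.mem_univ _, fun i => by simpa using hs.2.1 i, hs.2.2⟩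
  -- assemble
  have hchain : ∑ σ : Equiv.Perm (Fin N), ((Equiv.Perm.sign σ : ℤˣ) : ℤ) *
        ∏ i, (Matrix.of fun i j : Fin N =>
          if 0 ≤ (m : ℤ) + u j - v i then
            (m.choose (((m : ℤ) + u j - v i) / 2).toNat : ℤ)
          else 0) (σ i) i
      = (((Finset.univ : Finset (Fin N → Fin m → Bool)).filter
          (fun s => (∀ i, LGV.P m u s i m = v i) ∧ LGV.Dns m u s)).card : ℤ) := by
    calc ∑ σ : Equiv.Perm (Fin N), ((Equiv.Perm.sign σ : ℤˣ) : ℤ) *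
          ∏ i, (Matrix.of fun i j : Fin N =>
            if 0 ≤ (m : ℤ) + u j - v i then
              (m.choose (((m : ℤ) + u j - v i) / 2).toNat : ℤ)
            else 0) (σ i) i
        = ∑ σ : Equiv.Perm (Fin N), ((Equiv.Perm.sign σ : ℤˣ) : ℤ) *
            (((Finset.univ : Finset (Fin N → Fin m → Bool)).filter
              (fun s => ∀ i, LGV.P m u s i m = v (σ i))).card : ℤ) := by
          refine Finset.sum_congr rfl fun σ _ => ?_
          rw [Finset.prod_congr rfl (fun i _ => hentry σ i), hprodcard σ]
      _ = ∑ c ∈ (Finset.univ : Finset (Equiv.Perm (Fin N) × (Fin N → Fin m → Bool))).filter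
            (fun c => ∀ i, LGV.P m u c.2 i m = v (c.1 i)),
            ((Equiv.Perm.sign c.1 : ℤˣ) : ℤ) := hA
      _ = (∑ c ∈ (Finset.univ : Finset (Equiv.Perm (Fin N) × (Fin N → Fin m → Bool))).filter
            (fun c => (∀ i, LGV.P m u c.2 i m = v (c.1 i)) ∧ LGV.Dns m u c.2),
            ((Equiv.Perm.sign c.1 : ℤˣ) : ℤ))
          + ∑ c ∈ (Finset.univ : Finset (Equiv.Perm (Fin N) × (Fin N → Fin m → Bool))).filter
            (fun c => (∀ i, LGV.P m u c.2 i m = v (c.1 i)) ∧ ¬ LGV.Dns m u c.2),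
            ((Equiv.Perm.sign c.1 : ℤˣ) : ℤ) := hsplit.symm
      _ = (((Finset.univ : Finset (Equiv.Perm (Fin N) × (Fin N → Fin m → Bool))).filter
            (fun c => (∀ i, LGV.P m u c.2 i m = v (c.1 i)) ∧ LGV.Dns m u c.2)).card : ℤ)
          + 0 := by rw [hcancel, hsum1]
      _ = (((Finset.univ : Finset (Fin N → Fin m → Bool)).filter
          (fun s => (∀ i, LGV.P m u s i m = v i) ∧ LGV.Dns m u s)).card : ℤ) := by
          rw [add_zero, hcard]
  rw [hchain, ← LGV.card_eq u v hu hpar]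
end

section
/- For positive integers m and starting/ending points 0 ≤ u_1 < ... < u_N, 0 ≤ v_1 < ... < v_N with parities matching, the number of N-tuples of nonintersecting lattice paths of length m that additionally stay nonnegative, the i-th path from u_i to v_i, equals det_{1≤i,j≤N}( C(m, (m+u_j-v_i)/2) - C(m, (m+u_j+v_i)/2 + 1) ). -/
open Finset Matrix

open Finset

/-- one-sided binomial weight -/
def bb (m : ℕ) (d : ℤ) : ℤ :=
  if 0 ≤ (m : ℤ) + d then (m.choose (((m : ℤ) + d) / 2).toNat : ℤ) else 0

lemma bb_rec (m : ℕ) (d : ℤ) (h : Even ((m : ℤ) + 1 + d)) :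
    bb (m + 1) d = bb m (d - 1) + bb m (d + 1) := by
  obtain ⟨t, ht⟩ := h
  rcases lt_trichotomy t 0 with h0 | h0 | h0
  · have : ¬ (0 ≤ (m:ℤ) + 1 + d) := by omega
    simp only [bb]
    rw [if_neg (by push_cast; omega), if_neg (by omega), if_neg (by omega)]
    ring
  · subst h0
    simp only [bb]
    rw [if_pos (by push_cast; omega), if_neg (by omega), if_pos (by omega)]
    have h1 : ((m:ℤ) + 1 + d) / 2 = 0 := by omega
    have h2 : ((m:ℤ) + (d + 1)) / 2 = 0 := by omega
    have h1' : ((m:ℤ) + 1 + d) / 2 = 0 := by push_cast at h1; omega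
    simp [h1', h2]
  · -- t ≥ 1
    obtain ⟨k, hk⟩ : ∃ k : ℕ, (k : ℤ) + 1 = t := ⟨(t - 1).toNat, by omega⟩
    simp only [bb]
    rw [if_pos (by push_cast; omega), if_pos (by omega), if_pos (by omega)]
    have h1 : (((m+1:ℕ):ℤ) + d) / 2 = (k : ℤ) + 1 := by push_cast; omega
    have h2 : ((m:ℤ) + (d - 1)) / 2 = (k : ℤ) := by omega
    have h3 : ((m:ℤ) + (d + 1)) / 2 = (k : ℤ) + 1 := by omega
    rw [h1, h2, h3]
    rw [show ((k:ℤ)+1).toNat = k + 1 by omega, show ((k:ℤ)).toNat = k by omega]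
    rw [Nat.choose_succ_succ]
    push_cast; ring

lemma bb_symm (m : ℕ) (d : ℤ) (h : Even ((m : ℤ) + d)) : bb m d = bb m (-d) := by
  obtain ⟨t, ht⟩ := h
  rcases le_or_gt d (-(m:ℤ) - 1) with h1 | h1
  · simp only [bb]
    rw [if_neg (by omega)]
    rcases le_or_gt ((m:ℤ) + -d) (2 * m) with h2 | h2
    · omega
    · rw [if_pos (by omega)]
      have : m < (((m:ℤ) + -d)/2).toNat := by omega
      simp [Nat.choose_eq_zero_of_lt this]
  · rcases le_or_gt ((m:ℤ) + 1) d with h2 | h2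
    · simp only [bb]
      rw [if_pos (by omega), if_neg (by omega)]
      have : m < (((m:ℤ) + d)/2).toNat := by omega
      simp [Nat.choose_eq_zero_of_lt this]
    · -- |d| ≤ m
      simp only [bb]
      rw [if_pos (by omega), if_pos (by omega)]
      have ha : (((m:ℤ) + d)/2).toNat ≤ m := by omega
      have hb : (((m:ℤ) + -d)/2).toNat = m - (((m:ℤ) + d)/2).toNat := by omega
      rw [hb, Nat.choose_symm ha]


/-- wall-reflected path weight -/
def ab (m : ℕ) (x y : ℤ) : ℤ := bb m (x - y) - bb m (x + y + 2)

lemma ab_rec (m : ℕ) (x y : ℤ) (h : Even ((m : ℤ) + 1 + x + y)) :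
    ab (m + 1) x y = ab m (x - 1) y + ab m (x + 1) y := by
  unfold ab
  rw [bb_rec m (x - y) (by obtain ⟨t,ht⟩ := h; exact ⟨t - y, by omega⟩),
      bb_rec m (x + y + 2) (by obtain ⟨t,ht⟩ := h; exact ⟨t + 1, by omega⟩)]
  have e1 : x - y - 1 = x - 1 - y := by ring
  have e2 : x - y + 1 = x + 1 - y := by ring
  have e3 : x + y + 2 - 1 = x - 1 + y + 2 := by ring
  have e4 : x + y + 2 + 1 = x + 1 + y + 2 := by ring
  rw [e1, e2, e3, e4]; ring

lemma ab_wall (m : ℕ) (y : ℤ) (h : Even ((m : ℤ) + 1 + y)) : ab m (-1) y = 0 := by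
  unfold ab
  have : (-1 : ℤ) - y = -(-1 + y + 2) := by ring
  rw [this, ← bb_symm m (-1 + y + 2) (by obtain ⟨t,ht⟩ := h; exact ⟨t, by omega⟩)]
  ring

lemma ab_zero (x y : ℤ) (hx : 0 ≤ x) (hy : 0 ≤ y) (h : Even (x + y)) :
    ab 0 x y = if x = y then 1 else 0 := by
  obtain ⟨t, ht⟩ := h
  unfold ab bb
  have h2 : 1 ≤ ((((0:ℕ):ℤ) + (x + y + 2)) / 2).toNat := by omega
  rw [if_pos (show (0:ℤ) ≤ ((0:ℕ):ℤ) + (x + y + 2) by omega),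
      Nat.choose_eq_zero_of_lt (show 0 < _ from h2)]
  rcases eq_or_ne x y with rfl | hne
  · rw [if_pos (by omega)]
    have e : (((0:ℕ):ℤ) + (x - x)) / 2 = 0 := by omega
    simp [e]
  · rcases lt_or_gt_of_ne hne with h1 | h1
    · rw [if_neg (by omega)]; simp [hne]
    · rw [if_pos (by omega)]
      have h3 : 1 ≤ ((((0:ℕ):ℤ) + (x - y)) / 2).toNat := by omega
      rw [Nat.choose_eq_zero_of_lt (show 0 < _ from h3)]
      simp [hne]

/-- the matrix entry in the theorem equals `ab` -/
lemma ent_eq_ab (m : ℕ) (x y : ℤ) (hy : 0 ≤ y) (h0 : 0 ≤ (m:ℤ) + x + y)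
    (h : Even ((m : ℤ) + x + y)) :
    (if 0 ≤ (m : ℤ) + x - y then
        (m.choose (((m : ℤ) + x - y) / 2).toNat : ℤ) else 0) -
      (m.choose ((((m : ℤ) + x + y) / 2 + 1).toNat) : ℤ) = ab m x y := by
  unfold ab bb
  have e1 : (m:ℤ) + (x - y) = (m:ℤ) + x - y := by ring
  rw [e1]
  have e2 : ((m:ℤ) + (x + y + 2)) / 2 = ((m:ℤ) + x + y) / 2 + 1 := by omega
  have e3 : (((m:ℤ) + (x + y + 2)) / 2).toNat = (((m:ℤ) + x + y) / 2 + 1).toNat := by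
    rw [e2]
  rw [e3, if_pos (show (0:ℤ) ≤ (m:ℤ) + (x + y + 2) by omega)]


def cfg (N m : ℕ) (u v : Fin N → ℤ) : Type :=
  {S : Fin N → Fin (m + 1) → ℤ //
      (∀ i, S i 0 = u i) ∧
      (∀ i, S i (Fin.last m) = v i) ∧
      (∀ i, ∀ k : Fin m, |S i k.succ - S i k.castSucc| = 1) ∧
      (∀ i, ∀ k : Fin (m + 1), 0 ≤ S i k) ∧
      (∀ k : Fin (m + 1), StrictMono fun i => S i k)}

lemma cfg_finite (N m : ℕ) (u v : Fin N → ℤ) : Finite (cfg N m u v) := by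
  classical
  set C : ℤ := (∑ i, |u i|) + m with hC
  have key : ∀ S : cfg N m u v, ∀ i k, S.1 i k ∈ Set.Icc (-C) C := by
    rintro ⟨S, h0, -, hstep, -, -⟩ i k
    have bound : ∀ k : Fin (m + 1), |S i k| ≤ |u i| + k.val := by
      intro k
      induction k using Fin.induction with
      | zero => simp [h0 i]
      | succ j ih =>
        have h1 := abs_sub_abs_le_abs_sub (S i j.succ) (S i j.castSucc)
        have h2 := hstep i j
        have h3 : (j.succ : ℕ) = (j.castSucc : ℕ) + 1 := by simp
        omega
    have hb := bound k
    have hle : |u i| ≤ ∑ j, |u j| :=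
      Finset.single_le_sum (fun j _ => abs_nonneg (u j)) (Finset.mem_univ i)
    have hk : (k : ℕ) ≤ m := Nat.lt_succ_iff.mp k.isLt
    have := abs_le.mp (show |S i k| ≤ C by rw [hC]; push_cast; omega)
    exact Set.mem_Icc.mpr this
  haveI : Finite ↑(Set.Icc (-C) C) := (Set.finite_Icc _ _).to_subtype
  have hinj : Function.Injective
      (fun (S : cfg N m u v) (i : Fin N) (k : Fin (m + 1)) =>
        (⟨S.1 i k, key S i k⟩ : Set.Icc (-C) C)) := by
    intro S T h
    apply Subtype.ext
    funext i k
    exact congrArg Subtype.val (congrFun (congrFun h i) k)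
  exact Finite.of_injective _ hinj

lemma cfg_zero_card (N : ℕ) (u v : Fin N → ℤ) (hu : StrictMono u) (hu0 : ∀ i, 0 ≤ u i) :
    (Nat.card (cfg N 0 u v) : ℤ) = if u = v then 1 else 0 := by
  rcases eq_or_ne u v with rfl | hne
  · rw [if_pos rfl]
    have h1 : Nat.card (cfg N 0 u u) = 1 := by
      rw [Nat.card_eq_one_iff_unique]
      refine ⟨⟨?_⟩, ⟨⟨fun i _ => u i, fun i => rfl, fun i => rfl,
        fun i k => k.elim0, fun i k => hu0 i, fun k => hu⟩⟩⟩
      rintro ⟨S, hS0, -, -⟩ ⟨T, hT0, -, -⟩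
      apply Subtype.ext
      funext i k
      have hk : k = 0 := Fin.ext (by omega)
      show S i k = T i k
      rw [hk, hS0 i, hT0 i]
    rw [h1]; norm_num
  · rw [if_neg hne]
    have : IsEmpty (cfg N 0 u v) := by
      constructor
      rintro ⟨S, h0, hl, -⟩
      exact hne (funext fun i => by
        rw [← h0 i, ← hl i]; rfl)
    rw [Nat.card_of_isEmpty]; norm_num

lemma det_zero_case (N : ℕ) (u v : Fin N → ℤ) (hu : StrictMono u) (hv : StrictMono v) :
    Matrix.det (Matrix.of fun i j : Fin N => if u j = v i then (1 : ℤ) else 0)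
      = if u = v then 1 else 0 := by
  classical
  rcases eq_or_ne u v with rfl | hne
  · rw [if_pos rfl]
    have : (Matrix.of fun i j : Fin N => if u j = u i then (1 : ℤ) else 0) = 1 := by
      ext i j
      rw [Matrix.one_apply]
      by_cases h : i = j
      · subst h; simp
      · show (if u j = u i then (1:ℤ) else 0) = _
        rw [if_neg (fun hh => h (hu.injective hh).symm), if_neg h]
    rw [this, Matrix.det_one]
  · rw [if_neg hne]
    by_cases hc : ∀ j, ∃ i, u j = v i
    · exfalso
      apply hne
      set s : Finset ℤ := Finset.image v Finset.univ with hs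
      have hcard : s.card = N := by
        rw [hs, Finset.card_image_of_injective _ hv.injective, Finset.card_univ,
          Fintype.card_fin]
      have hus : ∀ x, u x ∈ s := by
        intro x
        obtain ⟨i, hi⟩ := hc x
        exact hi ▸ (Finset.mem_image.mpr ⟨i, Finset.mem_univ i, rfl⟩)
      have hvs : ∀ x, v x ∈ s := fun x =>
        Finset.mem_image.mpr ⟨x, Finset.mem_univ x, rfl⟩
      rw [Finset.orderEmbOfFin_unique hcard hus hu,
        Finset.orderEmbOfFin_unique hcard hvs hv]
    · push_neg at hc
      obtain ⟨j, hj⟩ := hc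
      exact Matrix.det_eq_zero_of_column_eq_zero j (fun i => by simp [hj i])

lemma nat_card_sigma {ι : Type*} [Fintype ι] (f : ι → Type*) [∀ i, Finite (f i)] :
    Nat.card (Σ i, f i) = ∑ i, Nat.card (f i) := by
  have := fun i => Fintype.ofFinite (f i)
  simp only [Nat.card_eq_fintype_card]
  exact Fintype.card_sigma

lemma fiber_card (N m : ℕ) (u v : Fin N → ℤ) (hu : StrictMono u) (hu0 : ∀ i, 0 ≤ u i)
    (ε : Fin N → ℤ) (hε : ∀ i, ε i = -1 ∨ ε i = 1) :
    Nat.card {S : cfg N (m + 1) u v // ∀ i, S.1 i 1 = u i + ε i} =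
      Nat.card (cfg N m (fun i => u i + ε i) v) := by
  apply Nat.card_congr
  refine
    { toFun := fun S => ⟨fun i k => S.1.1 i k.succ, ?_, ?_, ?_, ?_, ?_⟩
      invFun := fun T => ⟨⟨fun i => Fin.cons (u i) (T.1 i), ?_, ?_, ?_, ?_, ?_⟩, ?_⟩
      left_inv := ?_
      right_inv := ?_ }
  · intro i
    show S.1.1 i (0 : Fin (m + 1)).succ = u i + ε i
    rw [Fin.succ_zero_eq_one]; exact S.2 i
  · intro i
    show S.1.1 i (Fin.last m).succ = v i
    rw [Fin.succ_last]; exact S.1.2.2.1 i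
  · intro i k
    show |S.1.1 i k.succ.succ - S.1.1 i k.castSucc.succ| = 1
    have h := S.1.2.2.2.1 i k.succ
    rwa [← Fin.succ_castSucc] at h
  · exact fun i k => S.1.2.2.2.2.1 i k.succ
  · exact fun k => S.1.2.2.2.2.2 k.succ
  · exact fun i => Fin.cons_zero _ _
  · intro i
    have e : Fin.last (m + 1) = (Fin.last m).succ := rfl
    simp only [e, Fin.cons_succ]
    exact T.2.2.1 i
  · intro i k
    induction k using Fin.cases with
    | zero =>
      simp only [Fin.castSucc_zero, Fin.cons_succ, Fin.cons_zero]
      rw [T.2.1 i]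
      rcases hε i with h | h <;> simp [h]
    | succ j =>
      simp only [Fin.cons_succ, ← Fin.succ_castSucc]
      exact T.2.2.2.1 i j
  · intro i k
    induction k using Fin.cases with
    | zero =>
      simp only [Fin.cons_zero]
      exact hu0 i
    | succ j =>
      simp only [Fin.cons_succ]
      exact T.2.2.2.2.1 i j
  · intro k
    induction k using Fin.cases with
    | zero =>
      simp only [Fin.cons_zero]
      exact fun a b h => hu h
    | succ j =>
      simp only [Fin.cons_succ]
      exact fun a b h => T.2.2.2.2.2 j h
  · intro i
    simp only [← Fin.succ_zero_eq_one, Fin.cons_succ]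
    exact T.2.1 i
  · intro S
    refine Subtype.ext (Subtype.ext (funext fun i => funext fun k => ?_))
    induction k using Fin.cases with
    | zero =>
      simp only [Fin.cons_zero]
      exact (S.1.2.1 i).symm
    | succ j =>
      simp only [Fin.cons_succ]
  · intro T
    refine Subtype.ext (funext fun i => funext fun k => ?_)
    simp only [Fin.cons_succ]

lemma cfg_step_card (N m : ℕ) (u v : Fin N → ℤ) (hu : StrictMono u) (hu0 : ∀ i, 0 ≤ u i) :
    Nat.card (cfg N (m + 1) u v) =
      ∑ r ∈ Fintype.piFinset (fun _ : Fin N => ({-1, 1} : Finset ℤ)),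
        Nat.card (cfg N m (fun i => u i + r i) v) := by
  classical
  haveI := cfg_finite N (m + 1) u v
  have hmem : ∀ S : cfg N (m + 1) u v,
      (fun i => S.1 i 1 - u i) ∈ Fintype.piFinset (fun _ : Fin N => ({-1, 1} : Finset ℤ)) := by
    intro S
    rw [Fintype.mem_piFinset]
    intro i
    have h1 := S.2.2.2.1 i 0
    rw [Fin.succ_zero_eq_one, Fin.castSucc_zero, S.2.1 i] at h1
    have h2 := (abs_eq (by norm_num : (0:ℤ) ≤ 1)).mp h1
    simp only [Finset.mem_insert, Finset.mem_singleton]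
    omega
  let A : Finset (Fin N → ℤ) := Fintype.piFinset (fun _ : Fin N => ({-1, 1} : Finset ℤ))
  let f : cfg N (m + 1) u v → ↥A := fun S => ⟨fun i => S.1 i 1 - u i, hmem S⟩
  haveI : ∀ b : ↥A, Finite {S // f S = b} := fun b => Subtype.finite
  have h2 : ∀ b : ↥A, Nat.card {S // f S = b} =
      Nat.card (cfg N m (fun i => u i + b.1 i) v) := by
    intro b
    have hε : ∀ i, b.1 i = -1 ∨ b.1 i = 1 := by
      have hb := b.2
      rw [Fintype.mem_piFinset] at hb
      intro i
      simpa only [Finset.mem_insert, Finset.mem_singleton] using hb i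
    rw [← fiber_card N m u v hu hu0 b.1 hε]
    apply Nat.card_congr
    refine Equiv.subtypeEquivRight fun S => ?_
    rw [show (f S = b) ↔ ((fun i => S.1 i 1 - u i) = b.1) from Subtype.ext_iff, funext_iff]
    constructor
    · intro h i; have := h i; omega
    · intro h i; have := h i; omega
  calc Nat.card (cfg N (m + 1) u v)
      = Nat.card (Σ b : ↥A, {S // f S = b}) :=
        (Nat.card_congr (Equiv.sigmaFiberEquiv f)).symm
    _ = ∑ b : ↥A, Nat.card {S // f S = b} := nat_card_sigma _
    _ = ∑ b : ↥A, Nat.card (cfg N m (fun i => u i + b.1 i) v) :=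
        Finset.sum_congr rfl fun b _ => h2 b
    _ = ∑ r ∈ A, Nat.card (cfg N m (fun i => u i + r i) v) :=
        Finset.sum_coe_sort A (fun r => Nat.card (cfg N m (fun i => u i + r i) v))


lemma det_expand {N : ℕ} (R : Fin N → Fin N → ℤ) (R' : Fin N → ℤ → Fin N → ℤ)
    (h : ∀ j, R j = ∑ e ∈ ({-1, 1} : Finset ℤ), R' j e) :
    Matrix.det (Matrix.of fun i j : Fin N => R j i) =
      ∑ r ∈ Fintype.piFinset (fun _ : Fin N => ({-1, 1} : Finset ℤ)),
        Matrix.det (Matrix.of fun i j : Fin N => R' j (r j) i) := by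
  classical
  rw [← Matrix.det_transpose]
  have h1 : (Matrix.of fun i j : Fin N => R j i)ᵀ =
      Matrix.of (fun j : Fin N => ∑ e ∈ ({-1, 1} : Finset ℤ), R' j e) := by
    ext j i
    simp only [Matrix.transpose_apply, Matrix.of_apply, h j]
  rw [h1]
  have h2 := (Matrix.detRowAlternating (R := ℤ) (n := Fin N)).toMultilinearMap.map_sum_finset
    (g := fun j e => R' j e) (A := fun _ : Fin N => ({-1, 1} : Finset ℤ))
  simp only [AlternatingMap.coe_multilinearMap] at h2
  calc Matrix.det (Matrix.of fun j : Fin N => ∑ e ∈ ({-1, 1} : Finset ℤ), R' j e) =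
      Matrix.detRowAlternating (fun j : Fin N => ∑ e ∈ ({-1, 1} : Finset ℤ), R' j e) := rfl
    _ = ∑ r ∈ Fintype.piFinset (fun _ : Fin N => ({-1, 1} : Finset ℤ)),
          Matrix.detRowAlternating (fun j : Fin N => R' j (r j)) := h2
    _ = _ := by
      refine Finset.sum_congr rfl fun r _ => ?_
      rw [← Matrix.det_transpose (Matrix.of fun i j : Fin N => R' j (r j) i)]
      rfl


lemma main_lemma (N : ℕ) (v : Fin N → ℤ) (hv : StrictMono v) (hv0 : ∀ i, 0 ≤ v i) :
    ∀ (m : ℕ) (u : Fin N → ℤ), StrictMono u → (∀ i, 0 ≤ u i) →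
      (∀ i j, Even (u i + (m : ℤ) + v j)) →
      (Nat.card (cfg N m u v) : ℤ) =
        Matrix.det (Matrix.of fun i j : Fin N => ab m (u j) (v i)) := by
  intro m
  induction m with
  | zero =>
    intro u hu hu0 hpar
    have hmat : (Matrix.of fun i j : Fin N => ab 0 (u j) (v i)) =
        Matrix.of fun i j : Fin N => if u j = v i then (1 : ℤ) else 0 := by
      ext i j
      show ab 0 (u j) (v i) = _
      refine ab_zero _ _ (hu0 j) (hv0 i) ?_
      have h := hpar j i
      rw [Int.even_iff] at h ⊢
      push_cast at h
      omega
    rw [hmat, det_zero_case N u v hu hv, cfg_zero_card N u v hu hu0]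
  | succ m IH =>
    intro u hu hu0 hpar
    have hrec : ∀ j : Fin N, (fun i => ab (m + 1) (u j) (v i)) =
        ∑ e ∈ ({-1, 1} : Finset ℤ), (fun i => ab m (u j + e) (v i)) := by
      intro j
      funext i
      rw [Finset.sum_pair (by norm_num : (-1 : ℤ) ≠ 1)]
      have hpar' : Even ((m : ℤ) + 1 + u j + v i) := by
        have h := hpar j i
        rw [Int.even_iff] at h ⊢
        push_cast at h
        omega
      show ab (m + 1) (u j) (v i) = _
      rw [ab_rec m (u j) (v i) hpar', show u j + -1 = u j - 1 by ring]
      show _ = ab m (u j - 1) (v i) + ab m (u j + 1) (v i)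
      ring
    rw [cfg_step_card N m u v hu hu0]
    rw [det_expand (fun j i => ab (m + 1) (u j) (v i))
      (fun j e i => ab m (u j + e) (v i)) hrec]
    push_cast
    refine Finset.sum_congr rfl fun r hr => ?_
    rw [Fintype.mem_piFinset] at hr
    have hr' : ∀ i, r i = -1 ∨ r i = 1 := fun i => by
      simpa only [Finset.mem_insert, Finset.mem_singleton] using hr i
    by_cases hmono : StrictMono fun i => u i + r i
    · by_cases hpos : ∀ i, 0 ≤ u i + r i
      · refine IH (fun i => u i + r i) hmono hpos ?_
        intro i j
        have h := hpar i j
        rw [Int.even_iff] at h ⊢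
        push_cast at h ⊢
        rcases hr' i with h1 | h1 <;> omega
      · push_neg at hpos
        obtain ⟨i0, hi0⟩ := hpos
        have h0 : u i0 = 0 ∧ r i0 = -1 := by
          have := hu0 i0
          rcases hr' i0 with h1 | h1 <;> omega
        have hemp : IsEmpty (cfg N m (fun i => u i + r i) v) := by
          constructor
          rintro ⟨S, h0', -, -, hpos', -⟩
          have h1 := hpos' i0 0
          have h2 : S i0 0 = u i0 + r i0 := h0' i0
          omega
        rw [Nat.card_of_isEmpty]
        symm
        push_cast
        apply Matrix.det_eq_zero_of_column_eq_zero i0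
        intro i
        show ab m (u i0 + r i0) (v i) = 0
        rw [show u i0 + r i0 = -1 by omega]
        apply ab_wall
        have h := hpar i0 i
        rw [Int.even_iff] at h ⊢
        push_cast at h ⊢
        omega
    · have hmono' : ∃ a b : Fin N, a < b ∧ u b + r b ≤ u a + r a := by
        by_contra hcon
        push_neg at hcon
        exact hmono fun a b hab => hcon a b hab
      obtain ⟨a, b, hab, hba⟩ := hmono'
      have hev : Even (u a - u b) := by
        have h1 := hpar a a
        have h2 := hpar b a
        rw [Int.even_iff] at h1 h2 ⊢
        omega
      have hgap : u a + 2 ≤ u b := by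
        have h1 := hu hab
        rw [Int.even_iff] at hev
        omega
      have heq : u a + r a = u b + r b := by
        rcases hr' a with h1 | h1 <;> rcases hr' b with h2 | h2 <;> omega
      have hemp : IsEmpty (cfg N m (fun i => u i + r i) v) := by
        constructor
        rintro ⟨S, h0', -, -, -, hm'⟩
        have h1 : S a 0 < S b 0 := hm' 0 hab
        have h2 : S a 0 = u a + r a := h0' a
        have h3 : S b 0 = u b + r b := h0' b
        omega
      rw [Nat.card_of_isEmpty]
      symm
      push_cast
      apply Matrix.det_zero_of_column_eq hab.ne
      intro k
      show ab m (u a + r a) (v k) = ab m (u b + r b) (v k)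
      rw [heq]

/-- Reflection-extended Lindström–Gessel–Viennot formula: the number of `N`-tuples of
nonintersecting simple-random-walk lattice paths of length `m` that stay nonnegative,
the `i`-th running from `u i` to `v i`, equals
`det ( C(m, (m + u_j - v_i)/2) - C(m, (m + u_j + v_i)/2 + 1) )`. -/
theorem lgv_vicious_walkers_wall (N m : ℕ) (hm : 0 < m) (u v : Fin N → ℤ)
    (hu : StrictMono u) (hv : StrictMono v) (hu0 : ∀ i, 0 ≤ u i) (hv0 : ∀ i, 0 ≤ v i)
    (hpar : ∀ i j : Fin N, Even (u i + m + v j)) :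
    (Nat.card {S : Fin N → Fin (m + 1) → ℤ //
        (∀ i, S i 0 = u i) ∧
        (∀ i, S i (Fin.last m) = v i) ∧
        (∀ i, ∀ k : Fin m, |S i k.succ - S i k.castSucc| = 1) ∧
        (∀ i, ∀ k : Fin (m + 1), 0 ≤ S i k) ∧
        (∀ k : Fin (m + 1), StrictMono fun i => S i k)} : ℤ) =
      Matrix.det (Matrix.of fun i j : Fin N =>
        (if 0 ≤ (m : ℤ) + u j - v i then
            (m.choose (((m : ℤ) + u j - v i) / 2).toNat : ℤ)
          else 0) -
        (m.choose ((((m : ℤ) + u j + v i) / 2 + 1).toNat) : ℤ)) := by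
  have hmat : (Matrix.of fun i j : Fin N =>
        (if 0 ≤ (m : ℤ) + u j - v i then
            (m.choose (((m : ℤ) + u j - v i) / 2).toNat : ℤ)
          else 0) -
        (m.choose ((((m : ℤ) + u j + v i) / 2 + 1).toNat) : ℤ)) =
      Matrix.of fun i j : Fin N => ab m (u j) (v i) := by
    ext i j
    show _ = ab m (u j) (v i)
    refine ent_eq_ab m (u j) (v i) (hv0 i) ?_ ?_
    · have := hu0 j; have := hv0 i; omega
    · have h := hpar j i
      rw [Int.even_iff] at h ⊢
      omega
  rw [hmat]
  exact main_lemma N v hv hv0 m u hu hu0 (fun i j => hpar i j)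
end

section
/- Stirling-type asymptotics: for fixed real v, as ℓ → ∞ through positive integers, (2ℓ)! / ((ℓ-v)!(ℓ+v)!) = (ℓπ)^{-1/2} 2^{2ℓ} (1 - v²/ℓ²)^{-ℓ-1/2} ((1-v/ℓ)/(1+v/ℓ))^v (1 + O(1/ℓ)), where factorials of non-integers are interpreted via the Gamma function. -/
open Real


lemma gautschi_upper {x w : ℝ} (hx : 0 < x) (hw0 : 0 ≤ w) (hw1 : w ≤ 1) :
    Real.Gamma (x + 1 + w) ≤ Real.Gamma (x + 1) * (x + 1) ^ w := by
  have h1 : (0:ℝ) < x + 1 := by linarith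
  have h2 : (0:ℝ) < x + 2 := by linarith
  have hg1 := Real.Gamma_pos_of_pos h1
  have hg2 := Real.Gamma_pos_of_pos h2
  have hgw := Real.Gamma_pos_of_pos (show (0:ℝ) < x + 1 + w by linarith)
  have hconv := Real.convexOn_log_Gamma.2 (Set.mem_Ioi.2 h1) (Set.mem_Ioi.2 h2)
    (by linarith : (0:ℝ) ≤ 1 - w) hw0 (by ring)
  have hc : (1 - w) • (x + 1) + w • (x + 2) = x + 1 + w := by
    simp [smul_eq_mul]; ring
  rw [hc] at hconv
  simp only [Function.comp_apply, smul_eq_mul] at hconv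
  have : Real.Gamma (x + 1 + w) ≤ Real.Gamma (x+1) ^ (1 - w) * Real.Gamma (x+2) ^ w := by
    calc Real.Gamma (x + 1 + w) = Real.exp (Real.log (Real.Gamma (x+1+w))) := (Real.exp_log hgw).symm
    _ ≤ Real.exp ((1-w) * Real.log (Real.Gamma (x+1)) + w * Real.log (Real.Gamma (x+2))) :=
        Real.exp_le_exp.2 hconv
    _ = Real.Gamma (x+1) ^ (1 - w) * Real.Gamma (x+2) ^ w := by
        rw [Real.exp_add, Real.rpow_def_of_pos hg1, Real.rpow_def_of_pos hg2]
        ring_nf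
  refine this.trans_eq ?_
  have hx2 : Real.Gamma (x + 2) = (x+1) * Real.Gamma (x+1) := by
    have := Real.Gamma_add_one (s := x+1) h1.ne'
    rw [show x + 1 + 1 = x + 2 by ring] at this
    exact this
  rw [hx2, Real.mul_rpow h1.le hg1.le, ← mul_assoc, mul_comm (Real.Gamma (x+1) ^ (1-w)),
    mul_assoc, ← Real.rpow_add hg1, mul_comm]
  norm_num

lemma gautschi_lower {x w : ℝ} (hx : 0 < x) (hw0 : 0 ≤ w) (hw1 : w ≤ 1) :
    Real.Gamma (x + 1) * (x + w) ^ w ≤ Real.Gamma (x + 1 + w) := by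
  have hxw : (0:ℝ) < x + w := by linarith
  have h1 : (0:ℝ) < x + 1 := by linarith
  have h1w : (0:ℝ) < x + 1 + w := by linarith
  have hg1 := Real.Gamma_pos_of_pos h1
  have hgxw := Real.Gamma_pos_of_pos hxw
  have hg1w := Real.Gamma_pos_of_pos h1w
  have hconv := Real.convexOn_log_Gamma.2 (Set.mem_Ioi.2 hxw) (Set.mem_Ioi.2 h1w)
    hw0 (by linarith : (0:ℝ) ≤ 1 - w) (by ring)
  have hc : w • (x + w) + (1 - w) • (x + 1 + w) = x + 1 := by
    simp [smul_eq_mul]; ring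
  rw [hc] at hconv
  simp only [Function.comp_apply, smul_eq_mul] at hconv
  have key : Real.Gamma (x + 1) ≤ Real.Gamma (x+w) ^ w * Real.Gamma (x+1+w) ^ (1-w) := by
    calc Real.Gamma (x + 1) = Real.exp (Real.log (Real.Gamma (x+1))) := (Real.exp_log hg1).symm
    _ ≤ _ := Real.exp_le_exp.2 hconv
    _ = _ := by rw [Real.exp_add, Real.rpow_def_of_pos hgxw, Real.rpow_def_of_pos hg1w]; ring_nf
  have hxw' : Real.Gamma (x + w) = Real.Gamma (x + 1 + w) / (x + w) := by
    have := Real.Gamma_add_one (s := x + w) hxw.ne'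
    rw [show x + w + 1 = x + 1 + w by ring] at this
    field_simp [this]
    exact this.symm
  rw [hxw', Real.div_rpow hg1w.le hxw.le, div_mul_eq_mul_div, ← Real.rpow_add hg1w] at key
  rw [le_div_iff₀ (Real.rpow_pos_of_pos hxw w)] at key
  simpa using key



lemma F_base {v : ℝ} (hv0 : 0 ≤ v) (hv1 : v < 1) {x : ℝ} (hx : 1 ≤ x) :
    |Real.Gamma (x + 1 + v) * Real.Gamma (x + 1 - v) / Real.Gamma (x + 1) ^ 2 - 1| ≤ 1 / x := by
  have hx0 : (0:ℝ) < x := by linarith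
  have hxv : (0:ℝ) < x - v := by linarith
  have hg1 := Real.Gamma_pos_of_pos (show (0:ℝ) < x + 1 by linarith)
  have hgp := Real.Gamma_pos_of_pos (show (0:ℝ) < x + 1 + v by linarith)
  have hgm := Real.Gamma_pos_of_pos (show (0:ℝ) < x + 1 - v by linarith)
  have hU1 : Real.Gamma (x + 1 + v) ≤ Real.Gamma (x + 1) * (x + 1) ^ v :=
    gautschi_upper hx0 hv0 hv1.le
  have hL1 : Real.Gamma (x + 1) * (x + v) ^ v ≤ Real.Gamma (x + 1 + v) :=
    gautschi_lower hx0 hv0 hv1.le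
  have hU2 : Real.Gamma (x + 1) ≤ Real.Gamma (x + 1 - v) * (x + 1 - v) ^ v := by
    have := gautschi_upper (x := x - v) (w := v) hxv hv0 hv1.le
    rw [show x - v + 1 + v = x + 1 by ring, show x - v + 1 = x + 1 - v by ring] at this
    exact this
  have hL2 : Real.Gamma (x + 1 - v) * x ^ v ≤ Real.Gamma (x + 1) := by
    have := gautschi_lower (x := x - v) (w := v) hxv hv0 hv1.le
    rw [show x - v + 1 + v = x + 1 by ring, show x - v + 1 = x + 1 - v by ring,
      show x - v + v = x by ring] at this
    exact this
  have hxp : (0:ℝ) < x ^ v := Real.rpow_pos_of_pos hx0 v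
  have hmvp : (0:ℝ) < (x + 1 - v) ^ v := Real.rpow_pos_of_pos (by linarith) v
  have hGm_ub : Real.Gamma (x + 1 - v) ≤ Real.Gamma (x + 1) / x ^ v := by
    rw [le_div_iff₀ hxp]; exact hL2
  have hGm_lb : Real.Gamma (x + 1) / (x + 1 - v) ^ v ≤ Real.Gamma (x + 1 - v) := by
    rw [div_le_iff₀ hmvp]; exact hU2
  -- F upper bound
  have hFU : Real.Gamma (x + 1 + v) * Real.Gamma (x + 1 - v) / Real.Gamma (x + 1) ^ 2
      ≤ 1 + 1 / x := by
    have h1 : Real.Gamma (x + 1 + v) * Real.Gamma (x + 1 - v) / Real.Gamma (x + 1) ^ 2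
        ≤ (Real.Gamma (x + 1) * (x + 1) ^ v) * (Real.Gamma (x + 1) / x ^ v)
          / Real.Gamma (x + 1) ^ 2 := by gcongr
    have h2 : (Real.Gamma (x + 1) * (x + 1) ^ v) * (Real.Gamma (x + 1) / x ^ v)
          / Real.Gamma (x + 1) ^ 2 = ((x + 1) / x) ^ v := by
      rw [Real.div_rpow (by linarith) hx0.le]
      field_simp
    have h3 : ((x + 1) / x) ^ v ≤ (x + 1) / x := by
      nth_rewrite 2 [show (x+1)/x = ((x+1)/x) ^ (1:ℝ) by rw [Real.rpow_one]]
      exact Real.rpow_le_rpow_of_exponent_le (by rw [le_div_iff₀ hx0]; linarith) hv1.le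
    have h4 : (x + 1) / x = 1 + 1 / x := by field_simp
    linarith [h1.trans (h2.le.trans (h3.trans_eq h4)) ]
  -- F lower bound
  have hFL : 1 - 1 / x ≤ Real.Gamma (x + 1 + v) * Real.Gamma (x + 1 - v)
      / Real.Gamma (x + 1) ^ 2 := by
    have h1 : (Real.Gamma (x + 1) * (x + v) ^ v) * (Real.Gamma (x + 1) / (x + 1 - v) ^ v)
          / Real.Gamma (x + 1) ^ 2
        ≤ Real.Gamma (x + 1 + v) * Real.Gamma (x + 1 - v) / Real.Gamma (x + 1) ^ 2 := by
      gcongr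
    have h2 : (Real.Gamma (x + 1) * (x + v) ^ v) * (Real.Gamma (x + 1) / (x + 1 - v) ^ v)
          / Real.Gamma (x + 1) ^ 2 = ((x + v) / (x + 1 - v)) ^ v := by
      rw [Real.div_rpow (by linarith) (by linarith)]
      field_simp
    have ht0 : (0:ℝ) < (x + v) / (x + 1 - v) := div_pos (by linarith) (by linarith)
    have ht : 1 - 1 / x ≤ ((x + v) / (x + 1 - v)) ^ v := by
      rcases le_or_gt 1 ((x + v) / (x + 1 - v)) with h | h
      · have : (1:ℝ) ≤ ((x + v) / (x + 1 - v)) ^ v := Real.one_le_rpow h hv0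
        have : 1 - 1/x ≤ (1:ℝ) := by
          have : (0:ℝ) < 1/x := by positivity
          linarith
        linarith [Real.one_le_rpow h hv0]
      · have hge : (x + v) / (x + 1 - v) ≤ ((x + v) / (x + 1 - v)) ^ v := by
          nth_rewrite 1 [show (x+v)/(x+1-v) = ((x+v)/(x+1-v)) ^ (1:ℝ) by rw [Real.rpow_one]]
          exact Real.rpow_le_rpow_of_exponent_ge ht0 h.le hv1.le
        have hgeb : 1 - 1 / x ≤ (x + v) / (x + 1 - v) := by
          rw [le_div_iff₀ (by linarith : (0:ℝ) < x + 1 - v)]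
          have hxx : (1 / x) * x = 1 := one_div_mul_cancel hx0.ne'
          nlinarith [hxx]
        linarith
    linarith [ht.trans (h2.symm.le.trans h1)]
  rw [abs_le]
  constructor <;> linarith

noncomputable def Fg (v x : ℝ) : ℝ :=
  Real.Gamma (x + 1 + v) * Real.Gamma (x + 1 - v) / Real.Gamma (x + 1) ^ 2



lemma Fg_base {v : ℝ} (hv0 : 0 ≤ v) (hv1 : v < 1) {x : ℝ} (hx : 1 ≤ x) :
    |Fg v x - 1| ≤ 1 / x := F_base hv0 hv1 hx

lemma Fg_step (v : ℝ) {x : ℝ} (hx : |v| + 1 < x) :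
    Fg (v + 1) x = Fg v x * ((x + 1 + v) / (x - v)) := by
  have hv := abs_lt.mp (lt_of_le_of_lt (by linarith : |v| ≤ |v| + 1) hx)
  have hxv : (0:ℝ) < x - v := by linarith [hv.2]
  have h1 : Real.Gamma (x + 1 + (v + 1)) = (x + 1 + v) * Real.Gamma (x + 1 + v) := by
    rw [show x + 1 + (v + 1) = (x + 1 + v) + 1 by ring,
      Real.Gamma_add_one (by nlinarith [abs_nonneg v, neg_abs_le v] : x + 1 + v ≠ 0)]
  have h2 : Real.Gamma (x + 1 - v) = (x - v) * Real.Gamma (x + 1 - (v + 1)) := by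
    rw [show x + 1 - v = (x - v) + 1 by ring, Real.Gamma_add_one hxv.ne',
      show x + 1 - (v + 1) = x - v by ring]
  have hg : 0 < Real.Gamma (x + 1) :=
    Real.Gamma_pos_of_pos (by linarith [abs_nonneg v] : (0:ℝ) < x + 1)
  unfold Fg
  rw [h1, h2]
  field_simp

lemma Fg_ind (n : ℕ) : ∀ v : ℝ, 0 ≤ v → v < n + 1 →
    ∃ C, 0 < C ∧ ∃ X : ℝ, 1 ≤ X ∧ ∀ x : ℝ, X ≤ x → |Fg v x - 1| ≤ C / x := by
  induction n with
  | zero =>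
    intro v h0 h1
    norm_num at h1
    exact ⟨1, one_pos, 1, le_refl _, fun x hx => Fg_base h0 h1 hx⟩
  | succ n ih =>
    intro v h0 h1
    rcases lt_or_ge v 1 with hv1 | hv1
    · exact ⟨1, one_pos, 1, le_refl _, fun x hx => Fg_base h0 hv1 hx⟩
    · obtain ⟨C, hC, X, hX1, hX⟩ := ih (v - 1) (by linarith) (by push_cast at h1 ⊢; linarith)
      refine ⟨2 * C + 4 * v + 1, by positivity, max X (4 * v + 4),
        le_trans hX1 (le_max_left _ _), ?_⟩
      intro x hx
      have hxX : X ≤ x := le_trans (le_max_left _ _) hx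
      have hx4 : 4 * v + 4 ≤ x := le_trans (le_max_right _ _) hx
      have hx0 : (0:ℝ) < x := by linarith
      have hstep : Fg v x = Fg (v - 1) x * ((x + v) / (x + 1 - v)) := by
        have h := Fg_step (v - 1) (x := x) (by
          rw [abs_of_nonneg (by linarith : (0:ℝ) ≤ v - 1)]; linarith)
        rw [show v - 1 + 1 = v by ring] at h
        rw [h, show x + 1 + (v - 1) = x + v by ring, show x - (v - 1) = x + 1 - v by ring]
      have hden : x / 2 ≤ x + 1 - v := by linarith
      have hden0 : (0:ℝ) < x + 1 - v := by linarith
      set δ : ℝ := (x + v) / (x + 1 - v) - 1 with hδdef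
      have hδeq : δ = (2 * v - 1) / (x + 1 - v) := by
        rw [hδdef]; field_simp; ring
      have hδ0 : 0 ≤ δ := by
        rw [hδeq]; exact div_nonneg (by linarith) hden0.le
      have hδle : δ ≤ 4 * v / x := by
        rw [hδeq, div_le_div_iff₀ hden0 hx0]
        nlinarith
      have hδ1 : δ ≤ 1 := by
        refine hδle.trans ?_
        rw [div_le_one hx0]; linarith
      have hF' := hX x hxX
      have habs : |Fg v x - 1| = |(Fg (v-1) x - 1) * (1 + δ) + δ| := by
        rw [hstep, hδdef]; ring_nf
      rw [habs]
      calc |(Fg (v-1) x - 1) * (1 + δ) + δ| ≤ |(Fg (v-1) x - 1)| * |1 + δ| + |δ| := by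
            exact (abs_add_le _ _).trans (by rw [abs_mul])
      _ ≤ (C / x) * 2 + 4 * v / x := by
            have hb1 : |1 + δ| ≤ 2 := by rw [abs_of_nonneg (by linarith)]; linarith
            have hb2 : |δ| ≤ 4 * v / x := by rw [abs_of_nonneg hδ0]; exact hδle
            have := mul_le_mul hF' hb1 (abs_nonneg _) (by positivity : (0:ℝ) ≤ C / x)
            linarith
      _ ≤ (2 * C + 4 * v + 1) / x := by
            have heq : C / x * 2 + 4 * v / x = (2 * C + 4 * v) / x := by ring
            rw [heq]
            gcongr ?_ / x
            linarith
lemma Fg_all (v : ℝ) :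
    ∃ C, 0 < C ∧ ∃ X : ℝ, 1 ≤ X ∧ ∀ x : ℝ, X ≤ x → |Fg v x - 1| ≤ C / x := by
  rcases le_total 0 v with h | h
  · exact Fg_ind ⌈v⌉₊ v h (lt_of_le_of_lt (Nat.le_ceil v) (by exact_mod_cast lt_add_one _))
  · have hFg : ∀ x, Fg (-v) x = Fg v x := by
      intro x
      unfold Fg
      rw [show x + 1 + -v = x + 1 - v by ring, show x + 1 - -v = x + 1 + v by ring, mul_comm]
    obtain ⟨C, hC, X, hX1, hX⟩ := Fg_ind ⌈-v⌉₊ (-v) (by linarith)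
      (lt_of_le_of_lt (Nat.le_ceil _) (by exact_mod_cast lt_add_one _))
    exact ⟨C, hC, X, hX1, fun x hx => by rw [← hFg]; exact hX x hx⟩

lemma abs_log_one_add_le {t : ℝ} (ht : |t| ≤ 1/2) : |Real.log (1 + t)| ≤ 2 * |t| := by
  have h := abs_le.mp ht
  have h0 : (0:ℝ) < 1 + t := by linarith
  rcases le_or_gt 0 t with hs | hs
  · rw [abs_of_nonneg (Real.log_nonneg (by linarith)), abs_of_nonneg hs]
    have := Real.log_le_sub_one_of_pos h0
    linarith
  · rw [abs_of_nonpos (Real.log_nonpos (by linarith) (by linarith)), abs_of_neg hs]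
    have hinv : Real.log (1 + t)⁻¹ ≤ (1 + t)⁻¹ - 1 :=
      Real.log_le_sub_one_of_pos (by positivity)
    rw [Real.log_inv] at hinv
    have hle : (1 + t)⁻¹ - 1 ≤ -2 * t := by
      rw [inv_eq_one_div, div_sub' h0.ne']
      rw [div_le_iff₀ h0]
      nlinarith
    linarith

lemma abs_exp_sub_one_le {s : ℝ} (hs : |s| ≤ 1/2) : |Real.exp s - 1| ≤ 2 * |s| := by
  have h := abs_le.mp hs
  have h1 : s + 1 ≤ Real.exp s := Real.add_one_le_exp s
  have h2 : -s + 1 ≤ Real.exp (-s) := Real.add_one_le_exp (-s)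
  rw [Real.exp_neg] at h2
  have hep : (0:ℝ) < Real.exp s := Real.exp_pos s
  rcases le_or_gt 0 s with h0 | h0
  · rw [abs_of_nonneg (by linarith), abs_of_nonneg h0]
    have hs1 : (0:ℝ) < 1 - s := by linarith
    have : Real.exp s * (1 - s) ≤ 1 := by
      have := mul_le_mul_of_nonneg_left h2 hep.le
      rw [mul_inv_cancel₀ hep.ne'] at this
      linarith [this]
    nlinarith
  · have h3 : Real.exp s ≤ 1 := Real.exp_le_one_iff.mpr h0.le
    rw [abs_of_nonpos (by linarith), abs_of_neg h0]
    linarith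

lemma D_bound (v : ℝ) : ∃ C, 0 < C ∧ ∃ X : ℝ, 1 ≤ X ∧ ∀ x : ℝ, X ≤ x →
    |(1 - v ^ 2 / x ^ 2) ^ (-x - 1/2) * ((1 - v / x) / (1 + v / x)) ^ v - 1| ≤ C / x := by
  refine ⟨14 * v ^ 2 + 1, by positivity, 14 * v ^ 2 + 2 * |v| + 2,
    by nlinarith [sq_nonneg v, abs_nonneg v], ?_⟩
  intro x hx
  have hx0 : (0:ℝ) < x := by nlinarith [sq_nonneg v, abs_nonneg v]
  have hx1 : (1:ℝ) ≤ x := by nlinarith [sq_nonneg v, abs_nonneg v]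
  have hbv : |v| / x ≤ 1/2 := by
    rw [div_le_iff₀ hx0]; nlinarith [sq_nonneg v, abs_nonneg v]
  set b : ℝ := v / x with hbdef
  have habsb : |b| = |v| / x := by rw [hbdef, abs_div, abs_of_pos hx0]
  have hb : |b| ≤ 1/2 := habsb.le.trans hbv
  have hb' := abs_le.mp hb
  have ha_eq : v ^ 2 / x ^ 2 = b ^ 2 := by rw [hbdef, div_pow]
  have hb2 : b ^ 2 ≤ 1/4 := by nlinarith [abs_nonneg b, sq_abs b]
  have h1a : (0:ℝ) < 1 - b ^ 2 := by nlinarith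
  have h1mb : (0:ℝ) < 1 - b := by nlinarith
  have h1pb : (0:ℝ) < 1 + b := by nlinarith
  have hlog1 : |Real.log (1 - b ^ 2)| ≤ 2 * b ^ 2 := by
    have := abs_log_one_add_le (t := -(b^2))
      (by rw [abs_neg, abs_of_nonneg (sq_nonneg b)]; linarith)
    rwa [show 1 + -(b^2) = 1 - b^2 by ring, abs_neg, abs_of_nonneg (sq_nonneg b)] at this
  have hlog2 : |Real.log ((1 - b) / (1 + b))| ≤ 4 * |b| := by
    rw [Real.log_div h1mb.ne' h1pb.ne']
    have e1 : |Real.log (1 - b)| ≤ 2 * |b| := by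
      have := abs_log_one_add_le (t := -b) (by rwa [abs_neg])
      rwa [show 1 + -b = 1 - b by ring, abs_neg] at this
    have e2 : |Real.log (1 + b)| ≤ 2 * |b| := abs_log_one_add_le hb
    calc |Real.log (1-b) - Real.log (1+b)| ≤ |Real.log (1-b)| + |Real.log (1+b)| :=
          abs_sub _ _
    _ ≤ 4 * |b| := by linarith
  set s : ℝ := Real.log (1 - b ^ 2) * (-x - 1/2) + Real.log ((1 - b) / (1 + b)) * v with hsdef
  have hDeq : (1 - v ^ 2 / x ^ 2) ^ (-x - 1/2) * ((1 - v / x) / (1 + v / x)) ^ v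
      = Real.exp s := by
    rw [ha_eq, ← hbdef, Real.rpow_def_of_pos h1a, Real.rpow_def_of_pos (by positivity),
      ← Real.exp_add]
  have hb2x : b ^ 2 * x = v ^ 2 / x := by
    rw [hbdef, div_pow]; field_simp
  have t1 : |Real.log (1 - b ^ 2) * (-x - 1/2)| ≤ 2 * b ^ 2 * (x + 1/2) := by
    rw [abs_mul, abs_of_nonpos (by linarith : -x - 1/2 ≤ 0), show -(-x - 1/2) = x + 1/2 by ring]
    exact mul_le_mul hlog1 le_rfl (by linarith) (by positivity)
  have t2 : |Real.log ((1 - b) / (1 + b)) * v| ≤ 4 * (|b| * |v|) := by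
    rw [abs_mul, show 4 * (|b| * |v|) = (4 * |b|) * |v| by ring]
    exact mul_le_mul hlog2 le_rfl (abs_nonneg _) (by positivity)
  have habsv : |b| * |v| = b ^ 2 * x := by
    rw [habsb, show |v| / x * |v| = |v| ^ 2 / x by ring, sq_abs]
    rw [show v ^ 2 / x = v ^ 2 / x ^ 2 * x by field_simp, ha_eq]
  rw [habsv] at t2
  have e : 2 * b ^ 2 * (x + 1/2) = 2 * (b ^ 2 * x) + b ^ 2 := by ring
  have hs1 : |s| ≤ 2 * (b ^ 2 * x) + b ^ 2 + 4 * (b ^ 2 * x) := by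
    rw [hsdef]
    exact (abs_add_le _ _).trans (by linarith)
  have hsb : |s| ≤ 7 * (v ^ 2 / x) := by
    rw [← hb2x]
    have hbx : b ^ 2 ≤ b ^ 2 * x := le_mul_of_one_le_right (sq_nonneg b) hx1
    linarith
  have hs12 : |s| ≤ 1/2 := by
    refine hsb.trans ?_
    rw [show 7 * (v ^ 2 / x) = 7 * v ^ 2 / x by ring, div_le_iff₀ hx0]
    nlinarith [sq_nonneg v, abs_nonneg v]
  rw [hDeq]
  calc |Real.exp s - 1| ≤ 2 * |s| := abs_exp_sub_one_le hs12
  _ ≤ 14 * (v ^ 2 / x) := by linarith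
  _ ≤ (14 * v ^ 2 + 1) / x := by
      rw [show 14 * (v ^ 2 / x) = 14 * v ^ 2 / x by ring]
      gcongr ?_ / x
      linarith




lemma A_bounds {x : ℝ} (hx : 1 ≤ x) :
    1 - 1/x ≤ Real.sqrt x * Real.Gamma (x + 1/2) / Real.Gamma (x + 1) ∧
      Real.sqrt x * Real.Gamma (x + 1/2) / Real.Gamma (x + 1) ≤ 1 := by
  have hx0 : (0:ℝ) < x := by linarith
  have hx2 : (0:ℝ) < x - 1/2 := by linarith
  have hg1 : (0:ℝ) < Real.Gamma (x + 1) := Real.Gamma_pos_of_pos (by linarith)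
  have hgh : (0:ℝ) < Real.Gamma (x + 1/2) := Real.Gamma_pos_of_pos (by linarith)
  have hlow : Real.Gamma (x + 1/2) * Real.sqrt x ≤ Real.Gamma (x + 1) := by
    have := gautschi_lower (x := x - 1/2) (w := 1/2) hx2 (by norm_num) (by norm_num)
    rw [show x - 1/2 + 1 = x + 1/2 by ring, show x - 1/2 + 1/2 = x by ring,
      show x + 1/2 + 1/2 = x + 1 by ring, ← Real.sqrt_eq_rpow] at this
    exact this
  have hup : Real.Gamma (x + 1) ≤ Real.Gamma (x + 1/2) * Real.sqrt (x + 1/2) := by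
    have := gautschi_upper (x := x - 1/2) (w := 1/2) hx2 (by norm_num) (by norm_num)
    rw [show x - 1/2 + 1 + 1/2 = x + 1 by ring, show x - 1/2 + 1 = x + 1/2 by ring,
      ← Real.sqrt_eq_rpow] at this
    exact this
  constructor
  · rw [le_div_iff₀ hg1]
    have h1 : (0:ℝ) ≤ 1 - 1/x := by
      have : 1/x ≤ 1 := by rw [div_le_one hx0]; exact hx
      linarith
    calc (1 - 1/x) * Real.Gamma (x + 1)
        ≤ (1 - 1/x) * (Real.Gamma (x + 1/2) * Real.sqrt (x + 1/2)) :=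
          mul_le_mul_of_nonneg_left hup h1
    _ = ((1 - 1/x) * Real.sqrt (x + 1/2)) * Real.Gamma (x + 1/2) := by ring
    _ ≤ Real.sqrt x * Real.Gamma (x + 1/2) := by
        refine mul_le_mul_of_nonneg_right ?_ hgh.le
        have he : (1 - 1/x) * Real.sqrt (x + 1/2) = Real.sqrt ((1 - 1/x)^2 * (x + 1/2)) := by
          rw [Real.sqrt_mul (sq_nonneg _), Real.sqrt_sq h1]
        rw [he]
        apply Real.sqrt_le_sqrt
        have hinv : (1/x) * x = 1 := one_div_mul_cancel hx0.ne'
        have hinvle : 1/x ≤ 1 := by rw [div_le_one hx0]; exact hx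
        nlinarith [sq_nonneg (1/x), hinv, hinvle]
  · rw [div_le_one hg1]
    calc Real.sqrt x * Real.Gamma (x + 1/2) = Real.Gamma (x + 1/2) * Real.sqrt x := mul_comm _ _
    _ ≤ Real.Gamma (x + 1) := hlow

lemma key_identity (v : ℝ) {x : ℝ} (hx : |v| + 1 ≤ x) :
    Real.Gamma (2 * x + 1) / (Real.Gamma (x - v + 1) * Real.Gamma (x + v + 1)) =
      (x * π) ^ (-(1:ℝ)/2) * 2 ^ (2 * x) *
        (Real.sqrt x * Real.Gamma (x + 1/2) / Real.Gamma (x + 1)) / Fg v x := by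
  have hav := abs_nonneg v
  have hv := abs_le.mp (le_refl |v|)
  have hv1 : -x < v ∧ v < x := by
    constructor <;> nlinarith [neg_abs_le v, le_abs_self v]
  have hx0 : (0:ℝ) < x := by linarith
  have hg1 : (0:ℝ) < Real.Gamma (x + 1) := Real.Gamma_pos_of_pos (by linarith)
  have hgh : (0:ℝ) < Real.Gamma (x + 1/2) := Real.Gamma_pos_of_pos (by linarith)
  have hgp : (0:ℝ) < Real.Gamma (x + 1 + v) := Real.Gamma_pos_of_pos (by linarith [hv1.1])
  have hgm : (0:ℝ) < Real.Gamma (x + 1 - v) := Real.Gamma_pos_of_pos (by linarith [hv1.2])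
  have hsx : (0:ℝ) < Real.sqrt x := Real.sqrt_pos.mpr hx0
  have hsp : (0:ℝ) < Real.sqrt π := Real.sqrt_pos.mpr pi_pos
  have h2x : (0:ℝ) < (2:ℝ) ^ (2 * x) := Real.rpow_pos_of_pos two_pos _
  -- duplication formula
  have hdup := Real.Gamma_mul_Gamma_add_half (x + 1/2)
  rw [show x + 1/2 + 1/2 = x + 1 by ring, show 2 * (x + 1/2) = 2 * x + 1 by ring,
    show (1:ℝ) - (2 * x + 1) = -(2 * x) by ring,
    Real.rpow_neg (by norm_num : (0:ℝ) ≤ 2)] at hdup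
  have hdup2 : Real.Gamma (2 * x + 1)
      = Real.Gamma (x + 1/2) * Real.Gamma (x + 1) * 2 ^ (2 * x) / Real.sqrt π := by
    rw [eq_div_iff hsp.ne']
    have := congrArg (fun y => y * (2:ℝ) ^ (2 * x)) hdup
    rw [this]
    field_simp
  -- rewrite the (xπ)^(-1/2) factor
  have hxpi : (x * π) ^ (-(1:ℝ)/2) = (Real.sqrt x * Real.sqrt π)⁻¹ := by
    rw [show (-(1:ℝ)/2) = -(1/2) by norm_num, Real.rpow_neg (by positivity),
      Real.mul_rpow hx0.le pi_pos.le, ← Real.sqrt_eq_rpow, ← Real.sqrt_eq_rpow]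
  rw [hdup2, hxpi, show x - v + 1 = x + 1 - v by ring, show x + v + 1 = x + 1 + v by ring]
  unfold Fg
  field_simp

lemma alg_cancel (m1 m2 m3 m4 a f : ℝ) (hf : f ≠ 0) (h34 : m3 * m4 ≠ 0) :
    m1 * m2 * m3 * m4 * (a / (f * (m3 * m4))) = m1 * m2 * a / f := by
  field_simp
  have h3 := left_ne_zero_of_mul h34
  have h4 := right_ne_zero_of_mul h34
  rw [div_eq_iff h34]
  ring










/-- Stirling-type asymptotics: for fixed real `v`, as `ℓ → ∞`,
`(2ℓ)!/((ℓ-v)!(ℓ+v)!) = (ℓπ)^{-1/2} 2^{2ℓ} (1-v²/ℓ²)^{-ℓ-1/2} ((1-v/ℓ)/(1+v/ℓ))^v (1+O(1/ℓ))`,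
where `x! = Γ(x+1)`. -/
theorem binomial_ratio_asymptotics (v : ℝ) :
    ∃ C > (0 : ℝ), ∃ L : ℕ, ∀ ℓ : ℕ, L ≤ ℓ →
      ∃ r : ℝ, |r| ≤ C / ℓ ∧
        Real.Gamma (2 * ℓ + 1) / (Real.Gamma (ℓ - v + 1) * Real.Gamma (ℓ + v + 1)) =
          ((ℓ : ℝ) * π) ^ (-(1 : ℝ) / 2) * 2 ^ (2 * (ℓ : ℝ)) *
            (1 - v ^ 2 / (ℓ : ℝ) ^ 2) ^ (-(ℓ : ℝ) - 1 / 2) *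
            ((1 - v / ℓ) / (1 + v / ℓ)) ^ v * (1 + r) := by
  obtain ⟨CF, hCF, XF, hXF1, hFa⟩ := Fg_all v
  obtain ⟨CD, hCD, XD, hXD1, hDa⟩ := D_bound v
  refine ⟨4 + 6 * CF + 4 * CD, by positivity,
    ⌈XF⌉₊ + ⌈XD⌉₊ + ⌈2 * CF⌉₊ + ⌈2 * CD⌉₊ + ⌈|v|⌉₊ + 2, ?_⟩
  intro ℓ hℓ
  set x : ℝ := (ℓ : ℝ) with hxdef
  have hLx : (⌈XF⌉₊ + ⌈XD⌉₊ + ⌈2 * CF⌉₊ + ⌈2 * CD⌉₊ + ⌈|v|⌉₊ + 2 : ℝ) ≤ x := by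
    rw [hxdef]
    exact_mod_cast Nat.cast_le.mpr hℓ
  have c1 : XF ≤ (⌈XF⌉₊ : ℝ) := Nat.le_ceil _
  have c2 : XD ≤ (⌈XD⌉₊ : ℝ) := Nat.le_ceil _
  have c3 : 2 * CF ≤ (⌈2 * CF⌉₊ : ℝ) := Nat.le_ceil _
  have c4 : 2 * CD ≤ (⌈2 * CD⌉₊ : ℝ) := Nat.le_ceil _
  have c5 : |v| ≤ (⌈|v|⌉₊ : ℝ) := Nat.le_ceil _
  have nn : (0:ℝ) ≤ (⌈XF⌉₊ : ℝ) ∧ (0:ℝ) ≤ (⌈XD⌉₊ : ℝ) ∧ (0:ℝ) ≤ (⌈2 * CF⌉₊ : ℝ) ∧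
      (0:ℝ) ≤ (⌈2 * CD⌉₊ : ℝ) ∧ (0:ℝ) ≤ (⌈|v|⌉₊ : ℝ) := by
    refine ⟨?_, ?_, ?_, ?_, ?_⟩ <;> positivity
  obtain ⟨n1, n2, n3, n4, n5⟩ := nn
  have hxXF : XF ≤ x := by linarith [hXF1, hXD1, hCF, hCD]
  have hxXD : XD ≤ x := by linarith
  have hx2CF : 2 * CF ≤ x := by linarith
  have hx2CD : 2 * CD ≤ x := by linarith
  have hxv : |v| + 1 ≤ x := by linarith
  have hx1 : (1:ℝ) ≤ x := by linarith [abs_nonneg v]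
  have hx0 : (0:ℝ) < x := by linarith
  -- abbreviations
  set A : ℝ := Real.sqrt x * Real.Gamma (x + 1/2) / Real.Gamma (x + 1) with hAdef
  set F : ℝ := Fg v x with hFdef
  set D : ℝ := (1 - v ^ 2 / x ^ 2) ^ (-x - 1/2) * ((1 - v / x) / (1 + v / x)) ^ v with hDdef
  have hA := A_bounds hx1
  have hAabs : |A - 1| ≤ 1 / x := by
    rw [abs_le]
    constructor
    · have := hA.1; simp only [← hAdef] at this; linarith
    · have := hA.2; simp only [← hAdef] at this
      have : A - 1 ≤ 0 := by linarith
      have hpos : (0:ℝ) ≤ 1 / x := by positivity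
      linarith
  have hFabs : |F - 1| ≤ CF / x := hFa x hxXF
  have hDabs : |D - 1| ≤ CD / x := hDa x hxXD
  have hFhalf : 1/2 ≤ F ∧ F ≤ 3/2 := by
    have h1 : CF / x ≤ 1/2 := by rw [div_le_iff₀ hx0]; linarith
    have := abs_le.mp hFabs
    constructor <;> linarith
  have hDhalf : 1/2 ≤ D ∧ D ≤ 3/2 := by
    have h1 : CD / x ≤ 1/2 := by rw [div_le_iff₀ hx0]; linarith
    have := abs_le.mp hDabs
    constructor <;> linarith
  have hF0 : (0:ℝ) < F := by linarith [hFhalf.1]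
  have hD0 : (0:ℝ) < D := by linarith [hDhalf.1]
  have hFD4 : 1/4 ≤ F * D := by
    have h := mul_le_mul hFhalf.1 hDhalf.1 (by norm_num) hF0.le
    linarith
  have hFD0 : (0:ℝ) < F * D := by positivity
  refine ⟨A / (F * D) - 1, ?_, ?_⟩
  · -- the bound
    have hr : A / (F * D) - 1 = (A - F * D) / (F * D) := by field_simp
    rw [hr, abs_div, abs_of_pos hFD0]
    have hnum : |A - F * D| ≤ (1 + CF * (3/2) + CD) / x := by
      have h1 : |A - F * D| ≤ |A - 1| + |F * D - 1| := by
        have := abs_sub (A - 1) (F * D - 1)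
        calc |A - F * D| = |(A - 1) - (F * D - 1)| := by ring_nf
        _ ≤ |A - 1| + |F * D - 1| := abs_sub _ _
      have h2 : |F * D - 1| ≤ |F - 1| * D + |D - 1| := by
        calc |F * D - 1| = |(F - 1) * D + (D - 1)| := by ring_nf
        _ ≤ |(F - 1) * D| + |D - 1| := abs_add_le _ _
        _ = |F - 1| * D + |D - 1| := by rw [abs_mul, abs_of_pos hD0]
      have h3 : |F - 1| * D ≤ (CF / x) * (3/2) :=
        mul_le_mul hFabs hDhalf.2 hD0.le (by positivity)
      have : |A - F * D| ≤ 1 / x + (CF / x) * (3/2) + CD / x := by linarith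
      calc |A - F * D| ≤ 1 / x + (CF / x) * (3/2) + CD / x := this
      _ = (1 + CF * (3/2) + CD) / x := by ring
    calc |A - F * D| / (F * D) ≤ ((1 + CF * (3/2) + CD) / x) / (1/4) := by
          exact div_le_div₀ (by positivity) hnum (by norm_num) hFD4
    _ = (4 + 6 * CF + 4 * CD) / x := by ring
  · -- the identity
    have hk := key_identity v hxv
    rw [hk, show (1 : ℝ) + (A / (F * D) - 1) = A / (F * D) by ring, ← hAdef, ← hFdef, hDdef]
    exact (alg_cancel _ _ _ _ A F hF0.ne' (by rw [← hDdef]; exact hD0.ne')).symm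
end
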